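/- arXiv:1202.3689 — 4 statements merged into one kernel-verified Lean document; each statement's English description precedes it below -/
import Mathlib

section
/- Let (μ(t))_{t≥0} be a solution of the full selection–mutation model with mutation kernel γ. Then for all t ≥ 0, min{k_𝔮, μ(0)(Q)} ≤ μ(t)(Q) ≤ max{μ(0)(Q), K_𝔔}. -/
open MeasureTheory Filter Set Topology

noncomputable section

/-- Birth and mortality rates `f₁`, `f₂` on `ℝ × Q` satisfying assumptions (A1)-(A2). -/
structure EGTRates (Q : Type*) [MetricSpace Q] where
  f₁ : ℝ → Q → ℝ
  f₂ : ℝ → Q → ℝ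
  f₁_nonneg : ∀ X q, 0 ≤ f₁ X q
  f₂_nonneg : ∀ X q, 0 ≤ f₂ X q
  f₁_lip : ∀ C : ℝ, ∃ L : ℝ, 0 ≤ L ∧ ∀ q : Q, ∀ X ∈ Set.Icc (-C) C, ∀ Y ∈ Set.Icc (-C) C,
    |f₁ X q - f₁ Y q| ≤ L * |X - Y|
  f₂_lip : ∀ C : ℝ, ∃ L : ℝ, 0 ≤ L ∧ ∀ q : Q, ∀ X ∈ Set.Icc (-C) C, ∀ Y ∈ Set.Icc (-C) C,
    |f₂ X q - f₂ Y q| ≤ L * |X - Y|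
  f₁_anti : ∀ q, AntitoneOn (fun X => f₁ X q) (Set.Ici 0)
  f₂_mono : ∀ q, MonotoneOn (fun X => f₂ X q) (Set.Ici 0)
  f₁_cont : ∀ X, Continuous fun q => f₁ X q
  f₂_cont : ∀ X, Continuous fun q => f₂ X q
  f₂_inf_pos : ∃ ϖ : ℝ, 0 < ϖ ∧ ∀ q, ϖ ≤ f₂ 0 q

namespace EGTRates

variable {Q : Type*} [MetricSpace Q]

/-- The reproductive number `R(X,q) = f₁(X,q)/f₂(X,q)`. -/
def R (M : EGTRates Q) (X : ℝ) (q : Q) : ℝ := M.f₁ X q / M.f₂ X q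

/-- The carrying capacity `K(q)`. -/
def carCap (M : EGTRates Q) (q : Q) : ℝ :=
  if 1 ≤ M.R 0 q then sInf {K : ℝ | 0 ≤ K ∧ M.R K q ≤ 1} else 0

/-- Assumptions (A3)-(A5) relative to a fittest strategy `𝔔` and a least fit strategy `𝔮`. -/
def Assumptions (M : EGTRates Q) (𝔔 𝔮 : Q) : Prop :=
  (∀ q, M.R 0 q ≤ M.R 0 𝔔) ∧ (∀ q, M.R 0 𝔮 ≤ M.R 0 q) ∧
  (∃ X, 0 ≤ X ∧ M.R X 𝔔 ≤ 1) ∧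
  (∀ q qq : Q, ∀ Y : ℝ, 0 ≤ Y →
      (M.R 0 qq < M.R 0 q → M.R Y qq < M.R Y q) ∧
      (M.R 0 q = M.R 0 qq → M.R Y q = M.R Y qq)) ∧
  (1 ≤ M.R 0 𝔔 → M.R (M.carCap 𝔔) 𝔔 = 1 ∧ ∀ x, 0 ≤ x → M.R x 𝔔 = 1 → x = M.carCap 𝔔) ∧
  (1 ≤ M.R 0 𝔮 → M.R (M.carCap 𝔮) 𝔮 = 1 ∧ ∀ x, 0 ≤ x → M.R x 𝔮 = 1 → x = M.carCap 𝔮)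

/-- The class of fittest strategies `[𝔔]_R`. -/
def fittestClass (M : EGTRates Q) (𝔔 : Q) : Set Q := {q | M.R 0 q = M.R 0 𝔔}

end EGTRates

/-- Support of a Borel measure: points all of whose neighborhoods have positive measure. -/
def msupport {Q : Type*} [MetricSpace Q] [MeasurableSpace Q] (μ : Measure Q) : Set Q :=
  {q | ∀ ε : ℝ, 0 < ε → 0 < μ (Metric.ball q ε)}

/-- A solution of the full selection–mutation model with mutation kernel `γ`. -/
def IsSelMutSolution {Q : Type*} [MetricSpace Q] [MeasurableSpace Q] [BorelSpace Q]
    (M : EGTRates Q) (γ : Q → ProbabilityMeasure Q) (μ : ℝ → Measure Q) : Prop :=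
  (∀ t, IsFiniteMeasure (μ t)) ∧
  ∀ t ∈ Set.Ici (0:ℝ), ∀ E : Set Q, MeasurableSet E →
    HasDerivWithinAt (fun s => (μ s E).toReal)
      ((∫ qq, M.f₁ (μ t Set.univ).toReal qq * ((γ qq : Measure Q) E).toReal ∂(μ t)) -
        ∫ qq in E, M.f₂ (μ t Set.univ).toReal qq ∂(μ t)) (Set.Ici 0) t

/-- A solution of the pure selection (replicator) model. -/
def IsPureSelectionSolution {Q : Type*} [MetricSpace Q] [MeasurableSpace Q] [BorelSpace Q]
    (M : EGTRates Q) (μ : ℝ → Measure Q) : Prop :=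
  (∀ t, IsFiniteMeasure (μ t)) ∧
  ∀ t ∈ Set.Ici (0:ℝ), ∀ E : Set Q, MeasurableSet E →
    HasDerivWithinAt (fun s => (μ s E).toReal)
      (∫ q in E, (M.f₁ (μ t Set.univ).toReal q - M.f₂ (μ t Set.univ).toReal q) ∂(μ t))
      (Set.Ici 0) t


section Aux

variable {Q : Type*} [MetricSpace Q]

lemma EGT_f₂_pos (M : EGTRates Q) (q : Q) {X : ℝ} (hX : 0 ≤ X) : 0 < M.f₂ X q := by
  obtain ⟨ϖ, hϖ, hall⟩ := M.f₂_inf_pos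
  calc (0:ℝ) < ϖ := hϖ
    _ ≤ M.f₂ 0 q := hall q
    _ ≤ M.f₂ X q := M.f₂_mono q (le_refl (0:ℝ)) hX hX

lemma EGT_R_anti (M : EGTRates Q) (q : Q) {a b : ℝ} (ha : 0 ≤ a) (hab : a ≤ b) :
    M.R b q ≤ M.R a q := by
  unfold EGTRates.R
  exact div_le_div₀ (M.f₁_nonneg a q) (M.f₁_anti q ha (ha.trans hab) hab)
    (EGT_f₂_pos M q ha) (M.f₂_mono q ha (ha.trans hab) hab)

lemma EGT_upper_pointwise (M : EGTRates Q) (𝔔 𝔮 : Q) (hA : M.Assumptions 𝔔 𝔮)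
    (q : Q) {X : ℝ} (hX : 0 ≤ X) (hK : M.carCap 𝔔 ≤ X) : M.f₁ X q ≤ M.f₂ X q := by
  obtain ⟨hQmax, hqmin, hA3, hA4, hA5Q, hA5q⟩ := hA
  have hpos := EGT_f₂_pos M q hX
  rw [← div_le_one hpos]
  show M.R X q ≤ 1
  by_cases h1 : 1 ≤ M.R 0 𝔔
  · obtain ⟨hRK, _⟩ := hA5Q h1
    have hKnn : 0 ≤ M.carCap 𝔔 := by
      rw [EGTRates.carCap, if_pos h1]
      obtain ⟨X₀, hX₀, hR₀⟩ := hA3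
      exact le_csInf ⟨X₀, hX₀, hR₀⟩ (fun b hb => hb.1)
    have h2 : M.R X q ≤ M.R X 𝔔 := by
      rcases lt_or_eq_of_le (hQmax q) with h | h
      · exact ((hA4 𝔔 q X hX).1 h).le
      · exact ((hA4 𝔔 q X hX).2 h.symm).ge
    calc M.R X q ≤ M.R X 𝔔 := h2
      _ ≤ M.R (M.carCap 𝔔) 𝔔 := EGT_R_anti M 𝔔 hKnn hK
      _ = 1 := hRK
  · push_neg at h1
    calc M.R X q ≤ M.R 0 q := EGT_R_anti M q le_rfl hX
      _ ≤ M.R 0 𝔔 := hQmax q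
      _ ≤ 1 := h1.le

lemma EGT_lower_pointwise (M : EGTRates Q) (𝔔 𝔮 : Q) (hA : M.Assumptions 𝔔 𝔮)
    (q : Q) {X : ℝ} (hX : 0 ≤ X) (hk : X ≤ M.carCap 𝔮) (h1 : 1 ≤ M.R 0 𝔮) :
    M.f₂ X q ≤ M.f₁ X q := by
  obtain ⟨hQmax, hqmin, hA3, hA4, hA5Q, hA5q⟩ := hA
  have hpos := EGT_f₂_pos M q hX
  rw [← one_le_div hpos]
  show (1:ℝ) ≤ M.R X q
  obtain ⟨hRk, _⟩ := hA5q h1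
  calc (1:ℝ) = M.R (M.carCap 𝔮) 𝔮 := hRk.symm
    _ ≤ M.R X 𝔮 := EGT_R_anti M 𝔮 hX hk
    _ ≤ M.R X q := by
        rcases lt_or_eq_of_le (hqmin q) with h | h
        · exact ((hA4 q 𝔮 X hX).1 h).le
        · exact ((hA4 q 𝔮 X hX).2 h.symm).ge

lemma invariance_upper (f d : ℝ → ℝ) (B : ℝ)
    (hd : ∀ t ∈ Set.Ici (0:ℝ), HasDerivWithinAt f (d t) (Set.Ici 0) t)
    (h0 : f 0 ≤ B)
    (hsign : ∀ t ∈ Set.Ici (0:ℝ), B ≤ f t → d t ≤ 0) :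
    ∀ t ∈ Set.Ici (0:ℝ), f t ≤ B := by
  have hcont : ContinuousOn f (Set.Ici 0) := fun t ht => (hd t ht).continuousWithinAt
  intro t₁ ht₁
  by_contra hgt
  push_neg at hgt
  set S : Set ℝ := Set.Icc 0 t₁ ∩ f ⁻¹' Set.Iic B with hS
  have h0S : (0:ℝ) ∈ S := ⟨⟨le_refl 0, ht₁⟩, h0⟩
  have hSsub : S ⊆ Set.Icc 0 t₁ := Set.inter_subset_left
  have hbdd : BddAbove S := (isCompact_Icc.bddAbove).mono hSsub
  have hclosed : IsClosed S :=
    (hcont.mono Set.Icc_subset_Ici_self).preimage_isClosed_of_isClosed isClosed_Icc isClosed_Iic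
  set s := sSup S with hs
  have hsS : s ∈ S := hclosed.csSup_mem ⟨0, h0S⟩ hbdd
  have hsle : s ≤ t₁ := hsS.1.2
  have hs0 : 0 ≤ s := hsS.1.1
  have hfs : f s ≤ B := hsS.2
  have hslt : s < t₁ := lt_of_le_of_ne hsle (by intro h; rw [h] at hfs; exact absurd hfs (not_le.mpr hgt))
  have hmid : ∀ x ∈ Set.Ioo s t₁, B < f x := by
    intro x hx
    by_contra hc
    push_neg at hc
    have : x ∈ S := ⟨⟨hs0.trans hx.1.le, hx.2.le⟩, hc⟩
    exact absurd (le_csSup hbdd this) (not_le.mpr hx.1)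
  have hanti : AntitoneOn f (Set.Icc s t₁) := by
    apply antitoneOn_of_deriv_nonpos (convex_Icc s t₁)
      (hcont.mono (Set.Icc_subset_Ici_self.trans (Set.Ici_subset_Ici.mpr hs0)))
    · intro x hx
      rw [interior_Icc] at hx
      have hx0 : 0 < x := lt_of_le_of_lt hs0 hx.1
      exact (((hd x hx0.le).hasDerivAt (Ici_mem_nhds hx0)).differentiableAt).differentiableWithinAt
    · intro x hx
      rw [interior_Icc] at hx
      have hx0 : 0 < x := lt_of_le_of_lt hs0 hx.1
      rw [((hd x hx0.le).hasDerivAt (Ici_mem_nhds hx0)).deriv]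
      exact hsign x hx0.le (hmid x hx).le
  have : f t₁ ≤ f s := hanti ⟨le_refl s, hsle⟩ ⟨hsle, le_refl t₁⟩ hsle
  exact absurd (this.trans hfs) (not_le.mpr hgt)

end Aux

/-- Bounds for solutions of the full selection–mutation model:
`min{k_𝔮, μ(0)(Q)} ≤ μ(t)(Q) ≤ max{μ(0)(Q), K_𝔔}` for all `t ≥ 0`. -/
theorem selMut_total_population_bounds
    {Q : Type*} [MetricSpace Q] [CompactSpace Q] [MeasurableSpace Q] [BorelSpace Q]
    (M : EGTRates Q) (𝔔 𝔮 : Q) (hA : M.Assumptions 𝔔 𝔮)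
    (γ : Q → ProbabilityMeasure Q) (hγ : Continuous γ)
    (μ : ℝ → Measure Q) (hμ : IsSelMutSolution M γ μ) :
    ∀ t ∈ Set.Ici (0:ℝ),
      min (M.carCap 𝔮) ((μ 0) Set.univ).toReal ≤ ((μ t) Set.univ).toReal ∧
      ((μ t) Set.univ).toReal ≤ max ((μ 0) Set.univ).toReal (M.carCap 𝔔) := by
  obtain ⟨hfin, hODE⟩ := hμ
  set X : ℝ → ℝ := fun s => ((μ s) Set.univ).toReal with hXdef
  set D : ℝ → ℝ :=
    fun s => (∫ q, M.f₁ (X s) q ∂(μ s)) - ∫ q, M.f₂ (X s) q ∂(μ s) with hDdef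
  have hXnn : ∀ s, 0 ≤ X s := fun s => ENNReal.toReal_nonneg
  have hderiv : ∀ s ∈ Set.Ici (0:ℝ), HasDerivWithinAt X (D s) (Set.Ici 0) s := by
    intro s hs
    have h := hODE s hs Set.univ MeasurableSet.univ
    simpa [hDdef, hXdef, measure_univ, setIntegral_univ] using h
  have hint : ∀ s, ∀ g : Q → ℝ, Continuous g → Integrable g (μ s) := by
    intro s g hg
    haveI := hfin s
    exact (integrableOn_univ.mp (hg.continuousOn.integrableOn_compact isCompact_univ))
  have hsignU : ∀ s ∈ Set.Ici (0:ℝ),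
      max (X 0) (M.carCap 𝔔) ≤ X s → D s ≤ 0 := by
    intro s hs hBs
    have hK : M.carCap 𝔔 ≤ X s := le_trans (le_max_right _ _) hBs
    have hle : (∫ q, M.f₁ (X s) q ∂(μ s)) ≤ ∫ q, M.f₂ (X s) q ∂(μ s) :=
      integral_mono (hint s _ (M.f₁_cont _)) (hint s _ (M.f₂_cont _))
        (fun q => EGT_upper_pointwise M 𝔔 𝔮 hA q (hXnn s) hK)
    simp only [hDdef]
    linarith
  have hsignL : ∀ s ∈ Set.Ici (0:ℝ),
      X s ≤ min (M.carCap 𝔮) (X 0) → 0 ≤ D s := by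
    intro s hs hBs
    rcases eq_or_lt_of_le (hXnn s) with h0 | h0
    · haveI := hfin s
      have huniv : μ s Set.univ = 0 := by
        have h0' : ((μ s) Set.univ).toReal = 0 := h0.symm
        rw [ENNReal.toReal_eq_zero_iff] at h0'
        exact h0'.resolve_right (measure_ne_top _ _)
      have hμ0 : μ s = 0 := Measure.measure_univ_eq_zero.mp huniv
      simp [hDdef, hμ0]
    · have hk : X s ≤ M.carCap 𝔮 := le_trans hBs (min_le_left _ _)
      have h1 : 1 ≤ M.R 0 𝔮 := by
        by_contra h1
        have hc0 : M.carCap 𝔮 = 0 := by rw [EGTRates.carCap, if_neg h1]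
        rw [hc0] at hk
        linarith
      have hle : (∫ q, M.f₂ (X s) q ∂(μ s)) ≤ ∫ q, M.f₁ (X s) q ∂(μ s) :=
        integral_mono (hint s _ (M.f₂_cont _)) (hint s _ (M.f₁_cont _))
          (fun q => EGT_lower_pointwise M 𝔔 𝔮 hA q (hXnn s) hk h1)
      simp only [hDdef]
      linarith
  intro t ht
  constructor
  · have hlow := invariance_upper (fun s => -X s) (fun s => -D s)
      (-(min (M.carCap 𝔮) (X 0)))
      (fun s hs => (hderiv s hs).neg)
      (by exact neg_le_neg (min_le_right _ _))
      (fun s hs hB => by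
        have := hsignL s hs (by linarith)
        linarith) t ht
    linarith
  · exact invariance_upper X D (max (X 0) (M.carCap 𝔔)) hderiv (le_max_left _ _) hsignU t ht

end
end

section
/- Let (μ(t))_{t≥0} be a solution of the full selection–mutation model with mutation kernel γ. Suppose there exist a Borel set E ⊆ Q and ε > 0 such that inf_{q∈E} R(ε,q)·γ(q)(E) > 1 and μ(0)(E) > 0. Then the population is uniformly weakly persistent: limsup_{t→∞} μ(t)(Q) ≥ ε. -/
open MeasureTheory Filter Set Topology

noncomputable section

section AuxLemmas

/-- Evaluation of a continuously varying probability measure at a fixed Borel set is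
measurable. -/
lemma aux_measurable_eval {Q : Type*} [MetricSpace Q] [MeasurableSpace Q] [BorelSpace Q]
    (γ : Q → ProbabilityMeasure Q) (hγ : Continuous γ) :
    ∀ ⦃E : Set Q⦄, MeasurableSet E → Measurable fun q => (γ q : Measure Q) E := by
  apply MeasurableSet.induction_on_open
  · intro U hU
    have lsc : LowerSemicontinuous fun ν : ProbabilityMeasure Q => (ν : Measure Q) U :=
      lowerSemicontinuous_iff_le_liminf.2 fun ν =>
        MeasureTheory.ProbabilityMeasure.le_liminf_measure_open_of_tendsto tendsto_id hU
    exact LowerSemicontinuous.measurable (LowerSemicontinuous.comp lsc hγ)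
  · intro s hs hms
    have h : ∀ q, (γ q : Measure Q) sᶜ = 1 - (γ q : Measure Q) s := by
      intro q
      rw [measure_compl hs (measure_ne_top _ _), measure_univ]
    simpa only [h] using Measurable.const_sub hms 1
  · intro f hd hm hms
    have h : ∀ q, (γ q : Measure Q) (⋃ i, f i) = ∑' i, (γ q : Measure Q) (f i) :=
      fun q => measure_iUnion hd hm
    simpa only [h] using Measurable.ennreal_tsum hms

/-- Barrier lemma: a function on `[0,∞)` whose derivative is nonpositive whenever the
function is `≥ B` stays below `B` if it starts below `B`. -/
lemma aux_barrier {f d : ℝ → ℝ} {B : ℝ}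
    (hc : ContinuousOn f (Set.Ici 0))
    (hd : ∀ t : ℝ, 0 < t → HasDerivAt f (d t) t)
    (hneg : ∀ t : ℝ, 0 < t → B ≤ f t → d t ≤ 0)
    (h0 : f 0 ≤ B) : ∀ t, 0 ≤ t → f t ≤ B := by
  intro t ht
  by_contra hcon
  push_neg at hcon
  have ht0 : 0 < t := by
    rcases ht.lt_or_eq with h | h
    · exact h
    · exfalso; rw [← h] at hcon; linarith
  set S : Set ℝ := Set.Icc 0 t ∩ f ⁻¹' (Set.Iic B) with hS
  have hSne : S.Nonempty := ⟨0, ⟨le_rfl, ht⟩, h0⟩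
  have hSbdd : BddAbove S := ⟨t, fun x hx => hx.1.2⟩
  have hSclosed : IsClosed S :=
    (hc.mono Set.Icc_subset_Ici_self).preimage_isClosed_of_isClosed isClosed_Icc isClosed_Iic
  set t₀ := sSup S with ht₀
  have ht₀S : t₀ ∈ S := hSclosed.csSup_mem hSne hSbdd
  have ht₀B : f t₀ ≤ B := ht₀S.2
  have ht₀mem : t₀ ∈ Set.Icc 0 t := ht₀S.1
  have ht₀lt : t₀ < t := lt_of_le_of_ne ht₀mem.2 (fun h => by rw [h] at ht₀B; linarith)
  have hgt : ∀ s ∈ Set.Ioc t₀ t, B < f s := by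
    intro s hs
    by_contra hbs
    push_neg at hbs
    have hsS : s ∈ S := ⟨⟨le_trans ht₀mem.1 hs.1.le, hs.2⟩, hbs⟩
    exact absurd (le_csSup hSbdd hsS) (not_le.2 hs.1)
  have hanti : AntitoneOn f (Set.Icc t₀ t) := by
    apply antitoneOn_of_deriv_nonpos (convex_Icc _ _)
    · exact hc.mono (fun x hx => le_trans ht₀mem.1 hx.1)
    · intro x hx
      rw [interior_Icc] at hx
      exact ((hd x (lt_of_le_of_lt ht₀mem.1 hx.1)).differentiableAt).differentiableWithinAt
    · intro x hx
      rw [interior_Icc] at hx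
      have hx0 : 0 < x := lt_of_le_of_lt ht₀mem.1 hx.1
      rw [(hd x hx0).deriv]
      exact hneg x hx0 (le_of_lt (hgt x ⟨hx.1, hx.2.le⟩))
  have := hanti ⟨le_rfl, ht₀lt.le⟩ ⟨ht₀lt.le, le_rfl⟩ ht₀lt.le
  linarith

/-- A differential inequality `g' ≥ k·g` on `(a,∞)` makes `t ↦ g t · exp (−k t)`
monotone on `[a,∞)` (for `a ≥ 0`, with `g` differentiable on `(0,∞)`). -/
lemma aux_expMono {g d : ℝ → ℝ} {a k : ℝ} (ha : 0 ≤ a)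
    (hc : ContinuousOn g (Set.Ici 0))
    (hder : ∀ t : ℝ, 0 < t → HasDerivAt g (d t) t)
    (hk : ∀ t : ℝ, a < t → k * g t ≤ d t) :
    MonotoneOn (fun t => g t * Real.exp (-k * t)) (Set.Ici a) := by
  apply monotoneOn_of_deriv_nonneg (convex_Ici a)
  · exact (hc.mono (Set.Ici_subset_Ici.2 ha)).mul
      ((Real.continuous_exp.comp (continuous_const.mul continuous_id)).continuousOn)
  · intro x hx
    rw [interior_Ici] at hx
    exact (((hder x (lt_of_le_of_lt ha hx)).mul
      (((hasDerivAt_id x).const_mul (-k)).exp)).differentiableAt).differentiableWithinAt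
  · intro x hx
    rw [interior_Ici] at hx
    have hx0 : 0 < x := lt_of_le_of_lt ha hx
    have hD : HasDerivAt (fun t => g t * Real.exp (-k * t))
        (d x * Real.exp (-k * x) + g x * (Real.exp (-k * x) * (-k * 1))) x :=
      (hder x hx0).mul (((hasDerivAt_id x).const_mul (-k)).exp)
    rw [hD.deriv]
    have h1 := hk x hx
    have h2 := Real.exp_pos (-k * x)
    nlinarith

lemma aux_div_le_div {a b c d : ℝ} (ha : 0 ≤ a) (hac : a ≤ c) (hd : 0 < d) (hdb : d ≤ b) :
    a / b ≤ c / d := by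
  rw [div_le_div_iff₀ (lt_of_lt_of_le hd hdb) hd]
  nlinarith

end AuxLemmas

/-- Uniform weak persistence: if there exist a Borel set `E` and `ε > 0`
with `inf_{q∈E} R(ε,q)·γ(q)(E) > 1` and `μ(0)(E) > 0`, then
`limsup_{t→∞} μ(t)(Q) ≥ ε`. -/
theorem selMut_uniform_weak_persistence
    {Q : Type*} [MetricSpace Q] [CompactSpace Q] [MeasurableSpace Q] [BorelSpace Q]
    (M : EGTRates Q) (𝔔 𝔮 : Q) (hA : M.Assumptions 𝔔 𝔮)
    (γ : Q → ProbabilityMeasure Q) (hγ : Continuous γ)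
    (μ : ℝ → Measure Q) (hμ : IsSelMutSolution M γ μ)
    (E : Set Q) (hE : MeasurableSet E) (ε : ℝ) (hε : 0 < ε)
    (hinf : ∃ c : ℝ, 1 < c ∧ ∀ q ∈ E, c ≤ M.R ε q * ((γ q : Measure Q) E).toReal)
    (h0 : 0 < (μ 0) E) :
    ε ≤ Filter.limsup (fun t => ((μ t) Set.univ).toReal) Filter.atTop := by
  classical
  obtain ⟨hfin, hsol⟩ := hμ
  have hmne : ∀ (t : ℝ) (s : Set Q), (μ t) s ≠ ⊤ := fun t s =>
    @measure_ne_top _ _ _ (hfin t) s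
  -- `Q` is nonempty
  obtain ⟨q0, -⟩ := nonempty_of_measure_ne_zero (ne_of_gt h0)
  haveI : Nonempty Q := ⟨q0⟩
  obtain ⟨ϖ, hϖ, hϖle⟩ := M.f₂_inf_pos
  obtain ⟨c, hc1, hcle⟩ := hinf
  obtain ⟨Xs, hXs0, hXsR⟩ := hA.2.2.1
  set X : ℝ → ℝ := fun t => ((μ t) Set.univ).toReal with hXdef
  set g : ℝ → ℝ := fun t => ((μ t) E).toReal with hgdef
  have hXnn : ∀ t, 0 ≤ X t := fun t => ENNReal.toReal_nonneg
  have hgnn : ∀ t, 0 ≤ g t := fun t => ENNReal.toReal_nonneg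
  have hgleX : ∀ t, g t ≤ X t := fun t =>
    ENNReal.toReal_mono (hmne t _) (measure_mono (Set.subset_univ E))
  -- positivity of f₂ for nonnegative arguments
  have hf₂pos : ∀ Y : ℝ, 0 ≤ Y → ∀ q, ϖ ≤ M.f₂ Y q := fun Y hY q =>
    le_trans (hϖle q) (M.f₂_mono q (Set.mem_Ici.2 le_rfl) (Set.mem_Ici.2 hY) hY)
  -- integrability of continuous functions
  have integ : ∀ (t : ℝ) (f : Q → ℝ), Continuous f → Integrable f (μ t) := by
    intro t f hf
    haveI := hfin t
    exact integrableOn_univ.1 (hf.continuousOn.integrableOn_compact isCompact_univ)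
  -- derivatives
  set DX : ℝ → ℝ := fun t =>
    (∫ qq, M.f₁ (X t) qq * ((γ qq : Measure Q) Set.univ).toReal ∂(μ t)) -
      ∫ qq in Set.univ, M.f₂ (X t) qq ∂(μ t) with hDXdef
  set Dg : ℝ → ℝ := fun t =>
    (∫ qq, M.f₁ (X t) qq * ((γ qq : Measure Q) E).toReal ∂(μ t)) -
      ∫ qq in E, M.f₂ (X t) qq ∂(μ t) with hDgdef
  have hXderW : ∀ t ∈ Set.Ici (0:ℝ), HasDerivWithinAt X (DX t) (Set.Ici 0) t := fun t ht =>
    hsol t ht Set.univ MeasurableSet.univ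
  have hgderW : ∀ t ∈ Set.Ici (0:ℝ), HasDerivWithinAt g (Dg t) (Set.Ici 0) t := fun t ht =>
    hsol t ht E hE
  have hXcont : ContinuousOn X (Set.Ici 0) := fun t ht => (hXderW t ht).continuousWithinAt
  have hgcont : ContinuousOn g (Set.Ici 0) := fun t ht => (hgderW t ht).continuousWithinAt
  have hXder : ∀ t : ℝ, 0 < t → HasDerivAt X (DX t) t := fun t ht =>
    (hXderW t ht.le).hasDerivAt (Ici_mem_nhds ht)
  have hgder : ∀ t : ℝ, 0 < t → HasDerivAt g (Dg t) t := fun t ht =>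
    (hgderW t ht.le).hasDerivAt (Ici_mem_nhds ht)
  have hDXeq : ∀ t, DX t = (∫ qq, M.f₁ (X t) qq ∂(μ t)) - ∫ qq, M.f₂ (X t) qq ∂(μ t) := by
    intro t
    rw [hDXdef]
    simp only [measure_univ, ENNReal.toReal_one, mul_one, MeasureTheory.setIntegral_univ]
  -- Step 1: global bound on the total population
  set B : ℝ := max (X 0) Xs with hBdef
  have hB0 : 0 ≤ B := le_trans (hXnn 0) (le_max_left _ _)
  have hDXneg : ∀ t : ℝ, 0 < t → B ≤ X t → DX t ≤ 0 := by
    intro t ht hBX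
    have hXt0 : 0 ≤ X t := hXnn t
    have hXsle : Xs ≤ X t := le_trans (le_max_right _ _) hBX
    have hptw : ∀ q, M.f₁ (X t) q ≤ M.f₂ (X t) q := by
      intro q
      have hf₂q : 0 < M.f₂ (X t) q := lt_of_lt_of_le hϖ (hf₂pos _ hXt0 q)
      have hR𝔔 : M.R (X t) 𝔔 ≤ M.R Xs 𝔔 := by
        apply aux_div_le_div (M.f₁_nonneg _ _)
          (M.f₁_anti 𝔔 (Set.mem_Ici.2 hXs0) (Set.mem_Ici.2 hXt0) hXsle)
          (lt_of_lt_of_le hϖ (hf₂pos _ hXs0 𝔔))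
          (M.f₂_mono 𝔔 (Set.mem_Ici.2 hXs0) (Set.mem_Ici.2 hXt0) hXsle)
      have hRq : M.R (X t) q ≤ M.R (X t) 𝔔 := by
        rcases (hA.1 q).lt_or_eq with h | h
        · exact ((hA.2.2.2.1 𝔔 q (X t) hXt0).1 h).le
        · exact ((hA.2.2.2.1 q 𝔔 (X t) hXt0).2 h).le
      have hR1 : M.R (X t) q ≤ 1 := le_trans hRq (le_trans hR𝔔 hXsR)
      have : M.f₁ (X t) q / M.f₂ (X t) q ≤ 1 := hR1
      exact (div_le_one hf₂q).1 this
    rw [hDXeq t]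
    have := integral_mono (integ t _ (M.f₁_cont (X t))) (integ t _ (M.f₂_cont (X t))) hptw
    linarith
  have hXB : ∀ t, 0 ≤ t → X t ≤ B :=
    aux_barrier hXcont hXder hDXneg (le_max_left _ _)
  -- bounds for f₁ and f₂ on the relevant range
  obtain ⟨qM, -, hqM⟩ := isCompact_univ.exists_isMaxOn Set.univ_nonempty
    ((M.f₂_cont B).continuousOn)
  set B₂ : ℝ := M.f₂ B qM with hB₂def
  have hf₂bd : ∀ t, 0 ≤ t → ∀ q, M.f₂ (X t) q ≤ B₂ := fun t ht q =>
    le_trans (M.f₂_mono q (Set.mem_Ici.2 (hXnn t)) (Set.mem_Ici.2 hB0) (hXB t ht))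
      (hqM (Set.mem_univ q))
  obtain ⟨q1, -, hq1⟩ := isCompact_univ.exists_isMaxOn Set.univ_nonempty
    ((M.f₁_cont 0).continuousOn)
  set B₁ : ℝ := M.f₁ 0 q1 with hB₁def
  have hf₁bd : ∀ t, 0 ≤ t → ∀ q, M.f₁ (X t) q ≤ B₁ := fun t ht q =>
    le_trans (M.f₁_anti q (Set.mem_Ici.2 le_rfl) (Set.mem_Ici.2 (hXnn t)) (hXnn t))
      (hq1 (Set.mem_univ q))
  -- suppose for contradiction that the limsup is `< ε`
  by_contra hcon
  push_neg at hcon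
  have hbdd : Filter.IsBoundedUnder (· ≤ ·) Filter.atTop X :=
    ⟨B, Filter.eventually_map.2 (by
      filter_upwards [Filter.eventually_ge_atTop (0:ℝ)] with t ht using hXB t ht)⟩
  have hev : ∀ᶠ t in Filter.atTop, X t < ε :=
    Filter.eventually_lt_of_limsup_lt hcon hbdd
  obtain ⟨T₀, hT₀⟩ := Filter.eventually_atTop.1 hev
  set T : ℝ := max T₀ 0 with hTdef
  have hT0 : (0:ℝ) ≤ T := le_max_right _ _
  have hTT₀ : T₀ ≤ T := le_max_left _ _
  -- the measure of E stays positive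
  have hg0 : 0 < g 0 := ENNReal.toReal_pos (ne_of_gt h0) (hmne 0 E)
  have hDglb1 : ∀ t : ℝ, 0 < t → (-B₂) * g t ≤ Dg t := by
    intro t ht
    haveI := hfin t
    have hI1 : (0:ℝ) ≤ ∫ qq, M.f₁ (X t) qq * ((γ qq : Measure Q) E).toReal ∂(μ t) :=
      integral_nonneg fun q => mul_nonneg (M.f₁_nonneg _ q) ENNReal.toReal_nonneg
    have hI2 : ∫ qq in E, M.f₂ (X t) qq ∂(μ t) ≤ B₂ * g t := by
      calc ∫ qq in E, M.f₂ (X t) qq ∂(μ t) ≤ ∫ _qq in E, B₂ ∂(μ t) :=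
            MeasureTheory.setIntegral_mono_on
              ((integ t _ (M.f₂_cont (X t))).integrableOn)
              ((integrable_const B₂).integrableOn) hE (fun q _ => hf₂bd t ht.le q)
        _ = ((μ t) E).toReal • B₂ := by rw [MeasureTheory.setIntegral_const]; rfl
        _ = B₂ * g t := by rw [smul_eq_mul, hgdef]; ring
    simp only [hDgdef]
    linarith
  have hφ : MonotoneOn (fun t => g t * Real.exp (-(-B₂) * t)) (Set.Ici (0:ℝ)) :=
    aux_expMono le_rfl hgcont hgder hDglb1
  have hgT : 0 < g T := by
    have h1 := hφ (Set.mem_Ici.2 le_rfl) (Set.mem_Ici.2 hT0) hT0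
    simp only [mul_zero, Real.exp_zero, mul_one] at h1
    nlinarith [Real.exp_pos (-(-B₂) * T), hgnn T]
  -- growth estimate beyond time T
  set δ : ℝ := (c - 1) * ϖ with hδdef
  have hδ : 0 < δ := mul_pos (by linarith) hϖ
  have hDglb2 : ∀ t : ℝ, T < t → δ * g t ≤ Dg t := by
    intro t ht
    haveI := hfin t
    have ht0 : 0 < t := lt_of_le_of_lt hT0 ht
    have hXtlt : X t < ε := hT₀ t (le_trans hTT₀ ht.le)
    have hXt0 : 0 ≤ X t := hXnn t
    set h1 : Q → ℝ := fun q => M.f₁ (X t) q * ((γ q : Measure Q) E).toReal with hh1def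
    have hmeas : Measurable h1 :=
      ((M.f₁_cont (X t)).measurable).mul ((aux_measurable_eval γ hγ hE).ennreal_toReal)
    have hγle1 : ∀ q, ((γ q : Measure Q) E).toReal ≤ 1 := by
      intro q
      have hle : (γ q : Measure Q) E ≤ 1 := prob_le_one
      simpa using ENNReal.toReal_mono ENNReal.one_ne_top hle
    have h1nn : ∀ q, 0 ≤ h1 q := fun q =>
      mul_nonneg (M.f₁_nonneg _ q) ENNReal.toReal_nonneg
    have h1bd : ∀ q, ‖h1 q‖ ≤ B₁ := by
      intro q
      rw [Real.norm_eq_abs, abs_of_nonneg (h1nn q)]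
      have := hf₁bd t ht0.le q
      have hγnn : (0:ℝ) ≤ ((γ q : Measure Q) E).toReal := ENNReal.toReal_nonneg
      simp only [hh1def]
      nlinarith [M.f₁_nonneg (X t) q, hγle1 q]
    have h1int : Integrable h1 (μ t) :=
      ⟨hmeas.aestronglyMeasurable,
        MeasureTheory.HasFiniteIntegral.of_bounded (C := B₁) (Filter.Eventually.of_forall h1bd)⟩
    have hEbound : ∀ q ∈ E, M.f₂ (X t) q + δ ≤ h1 q := by
      intro q hq
      have hγnn : (0:ℝ) ≤ ((γ q : Measure Q) E).toReal := ENNReal.toReal_nonneg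
      have hf₂εpos : 0 < M.f₂ ε q := lt_of_lt_of_le hϖ (hf₂pos ε hε.le q)
      have hϖXt : ϖ ≤ M.f₂ (X t) q := hf₂pos _ hXt0 q
      have h2 : M.f₂ (X t) q ≤ M.f₂ ε q :=
        M.f₂_mono q (Set.mem_Ici.2 hXt0) (Set.mem_Ici.2 hε.le) hXtlt.le
      have h1' : M.f₁ ε q ≤ M.f₁ (X t) q :=
        M.f₁_anti q (Set.mem_Ici.2 hXt0) (Set.mem_Ici.2 hε.le) hXtlt.le
      have h3 : c ≤ M.R ε q * ((γ q : Measure Q) E).toReal := hcle q hq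
      have h4 : M.f₁ ε q = M.R ε q * M.f₂ ε q := by
        rw [EGTRates.R]
        field_simp
      have k1 : c * M.f₂ ε q ≤ M.f₁ ε q * ((γ q : Measure Q) E).toReal := by
        have hmul := mul_le_mul_of_nonneg_right h3 (le_of_lt hf₂εpos)
        calc c * M.f₂ ε q ≤ M.R ε q * ((γ q : Measure Q) E).toReal * M.f₂ ε q := hmul
          _ = M.f₁ ε q * ((γ q : Measure Q) E).toReal := by rw [h4]; ring
      have k2 : M.f₁ ε q * ((γ q : Measure Q) E).toReal ≤ h1 q :=
        mul_le_mul_of_nonneg_right h1' hγnn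
      have k3 : M.f₂ (X t) q + δ ≤ c * M.f₂ ε q := by
        rw [hδdef]
        nlinarith
      linarith
    have hI1 : ∫ q in E, (M.f₂ (X t) q + δ) ∂(μ t) ≤ ∫ q in E, h1 q ∂(μ t) :=
      MeasureTheory.setIntegral_mono_on
        (((integ t _ (M.f₂_cont (X t))).add (integrable_const δ)).integrableOn)
        h1int.integrableOn hE hEbound
    have hI2 : ∫ q in E, h1 q ∂(μ t) ≤ ∫ q, h1 q ∂(μ t) :=
      MeasureTheory.setIntegral_le_integral h1int (Filter.Eventually.of_forall h1nn)
    have hI3 : ∫ q in E, (M.f₂ (X t) q + δ) ∂(μ t) =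
        (∫ q in E, M.f₂ (X t) q ∂(μ t)) + δ * g t := by
      rw [MeasureTheory.integral_add ((integ t _ (M.f₂_cont (X t))).integrableOn)
        ((integrable_const δ).integrableOn), MeasureTheory.setIntegral_const]
      rw [smul_eq_mul, hgdef, measureReal_def]
      ring
    simp only [hDgdef]
    rw [hI3] at hI1
    linarith
  have hψ : MonotoneOn (fun t => g t * Real.exp (-δ * t)) (Set.Ici T) :=
    aux_expMono hT0 hgcont hgder hDglb2
  -- derive the contradiction
  set t₁ : ℝ := T + (ε / g T) / δ with ht₁def
  have hrpos : 0 < (ε / g T) / δ := div_pos (div_pos hε hgT) hδ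
  have ht₁ : T < t₁ := by rw [ht₁def]; linarith
  have hkey := hψ (Set.mem_Ici.2 le_rfl) (Set.mem_Ici.2 ht₁.le) ht₁.le
  have hgt₁ : g t₁ < ε := lt_of_le_of_lt (hgleX t₁)
    (hT₀ t₁ (le_trans hTT₀ ht₁.le))
  have hsplit : Real.exp (-δ * t₁) = Real.exp (-δ * T) * Real.exp (-(ε / g T)) := by
    rw [← Real.exp_add]
    congr 1
    rw [ht₁def]
    field_simp
    ring
  have hexpT := Real.exp_pos (-δ * T)
  have hexpw := Real.exp_pos (-(ε / g T))
  have hkey2 : g T ≤ ε * Real.exp (-(ε / g T)) := by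
    simp only [] at hkey
    rw [hsplit] at hkey
    have h5 : g t₁ * (Real.exp (-δ * T) * Real.exp (-(ε / g T))) ≤
        ε * (Real.exp (-δ * T) * Real.exp (-(ε / g T))) :=
      mul_le_mul_of_nonneg_right hgt₁.le (by positivity)
    nlinarith
  have h6 := Real.add_one_le_exp (ε / g T)
  have hexppos := Real.exp_pos (ε / g T)
  rw [Real.exp_neg] at hkey2
  have h7 : g T * Real.exp (ε / g T) ≤ ε := by
    calc g T * Real.exp (ε / g T) ≤ ε * (Real.exp (ε / g T))⁻¹ * Real.exp (ε / g T) :=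
          mul_le_mul_of_nonneg_right hkey2 hexppos.le
      _ = ε := by field_simp
  have h8 : g T * (ε / g T + 1) ≤ g T * Real.exp (ε / g T) :=
    mul_le_mul_of_nonneg_left h6 hgT.le
  have h9 : g T * (ε / g T + 1) = ε + g T := by field_simp
  linarith

end
end

section
/- Let (μ(t))_{t≥0} be a solution of the pure selection model such that supp(μ(0)) ∩ [𝔔]_R ≠ ∅. If q̆ ∈ Q satisfies q̆ ∉ [𝔔]_R (i.e., R(0,q̆) < R(0,𝔔)), then there exists δ = δ(q̆) > 0 such that μ(t)(B_δ(q̆)) → 0 as t → ∞, where B_δ(q̆) is the open ball of radius δ around q̆. -/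
open MeasureTheory Filter Set Topology

noncomputable section

section Helpers


lemma myAntitoneOn {s : Set ℝ} (hs : Convex ℝ s) {u u' : ℝ → ℝ}
    (hd : ∀ t ∈ s, HasDerivWithinAt u (u' t) s t)
    (h0 : ∀ t ∈ interior s, u' t ≤ 0) : AntitoneOn u s :=
  antitoneOn_of_hasDerivWithinAt_nonpos hs (fun t ht => (hd t ht).continuousWithinAt)
    (fun t ht => ((hd t (interior_subset ht)).mono interior_subset)) h0

lemma myMonotoneOn {s : Set ℝ} (hs : Convex ℝ s) {u u' : ℝ → ℝ}
    (hd : ∀ t ∈ s, HasDerivWithinAt u (u' t) s t)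
    (h0 : ∀ t ∈ interior s, 0 ≤ u' t) : MonotoneOn u s :=
  monotoneOn_of_hasDerivWithinAt_nonneg hs (fun t ht => (hd t ht).continuousWithinAt)
    (fun t ht => ((hd t (interior_subset ht)).mono interior_subset)) h0

lemma jointCont {Q : Type*} [MetricSpace Q] (f : ℝ → Q → ℝ)
    (lip : ∀ C : ℝ, ∃ L : ℝ, 0 ≤ L ∧ ∀ q : Q, ∀ X ∈ Set.Icc (-C) C, ∀ Y ∈ Set.Icc (-C) C,
      |f X q - f Y q| ≤ L * |X - Y|)
    (cont : ∀ X, Continuous fun q => f X q) :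
    Continuous fun P : ℝ × Q => f P.1 P.2 := by
  rw [Metric.continuous_iff]
  rintro ⟨x₀, q₀⟩ ε εpos
  obtain ⟨L, hL0, hL⟩ := lip (|x₀| + 1)
  have hc := (cont x₀).continuousAt (x := q₀)
  rw [Metric.continuousAt_iff] at hc
  obtain ⟨δ₁, hδ₁, hq⟩ := hc (ε/2) (by positivity)
  refine ⟨min δ₁ (min 1 (ε/(2*(L+1)))), by positivity, ?_⟩
  rintro ⟨x, q⟩ hdist
  rw [Prod.dist_eq] at hdist
  simp only [lt_min_iff, max_lt_iff] at hdist
  obtain ⟨⟨h1, h2⟩, ⟨h3, h4⟩, h5, h6⟩ := hdist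
  have hx1 : |x - x₀| < 1 := by rwa [Real.dist_eq] at h3
  have hx2 : |x - x₀| < ε/(2*(L+1)) := by rwa [Real.dist_eq] at h5
  have hxmem : x ∈ Set.Icc (-(|x₀|+1)) (|x₀|+1) := by
    rw [Set.mem_Icc]
    constructor <;> [nlinarith [abs_lt.1 hx1, neg_abs_le x₀, le_abs_self x₀];
      nlinarith [abs_lt.1 hx1, neg_abs_le x₀, le_abs_self x₀]]
  have hx0mem : x₀ ∈ Set.Icc (-(|x₀|+1)) (|x₀|+1) := by
    rw [Set.mem_Icc]; constructor <;> nlinarith [neg_abs_le x₀, le_abs_self x₀]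
  have hA : |f x q - f x₀ q| ≤ L * |x - x₀| := hL q x hxmem x₀ hx0mem
  have hB : |f x₀ q - f x₀ q₀| < ε/2 := by
    have := hq h2; rwa [Real.dist_eq] at this
  have h7 : L * |x - x₀| ≤ L * (ε/(2*(L+1))) :=
    mul_le_mul_of_nonneg_left hx2.le hL0
  have h8 : L * (ε/(2*(L+1))) ≤ ε/2 := by
    rw [mul_div_assoc', div_le_div_iff₀ (by positivity) (by norm_num)]
    nlinarith
  have : |f x q - f x₀ q₀| < ε := by
    calc |f x q - f x₀ q₀| ≤ |f x q - f x₀ q| + |f x₀ q - f x₀ q₀| := abs_sub_le _ _ _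
      _ < ε/2 + ε/2 := by linarith
      _ = ε := by ring
  rwa [Real.dist_eq]

lemma myBarrier {X X' : ℝ → ℝ} {M' M r : ℝ}
    (hd : ∀ t ∈ Ici (0:ℝ), HasDerivWithinAt X (X' t) (Ici 0) t)
    (hr : 0 < r) (hM : M' < M)
    (hdec : ∀ t ∈ Ici (0:ℝ), M' ≤ X t → X' t ≤ -r)
    {t₀ t₁ : ℝ} (ht₀ : 0 ≤ t₀) (ht01 : t₀ ≤ t₁) :
    X t₁ ≤ max (X t₀) M := by
  by_contra hcon
  push_neg at hcon
  rw [max_lt_iff] at hcon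
  obtain ⟨hc1, hc2⟩ := hcon
  have key : ∀ s, t₀ ≤ s → s ≤ t₁ → (∀ x ∈ Ioo s t₁, M' ≤ X x) → X t₁ + r * t₁ ≤ X s + r * s := by
    intro s hs0 hst hint
    have hanti : AntitoneOn (fun t => X t + r * t) (Icc s t₁) := by
      apply myAntitoneOn (u' := fun t => X' t + r) (convex_Icc s t₁)
      · intro t ht
        exact (((hd t (le_trans (le_trans ht₀ hs0) ht.1)).mono
          (fun x hx => le_trans (le_trans ht₀ hs0) hx.1)).add
          ((hasDerivWithinAt_id t _).const_mul r)).congr_deriv (by ring)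
      · intro t ht
        rw [interior_Icc] at ht
        have := hdec t (le_trans (le_trans ht₀ hs0) ht.1.le) (hint t ht)
        linarith
    have := hanti (Set.left_mem_Icc.2 hst) (Set.right_mem_Icc.2 hst) hst
    simpa using this
  set S := {t ∈ Icc t₀ t₁ | X t ≤ M'} with hS
  by_cases hne : S.Nonempty
  · have hcl : IsClosed S := by
      have hXc : ContinuousOn X (Icc t₀ t₁) := fun x hx =>
        ((hd x (le_trans ht₀ hx.1)).continuousWithinAt).mono
          (fun y hy => le_trans ht₀ hy.1)
      exact hXc.preimage_isClosed_of_isClosed isClosed_Icc isClosed_Iic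
    have hScomp : IsCompact S :=
      isCompact_Icc.of_isClosed_subset hcl (fun x hx => hx.1)
    have hsmem : sSup S ∈ S := hScomp.sSup_mem hne
    set s := sSup S
    obtain ⟨⟨hs0, hst⟩, hsM⟩ := hsmem
    have hgt : ∀ x ∈ Ioo s t₁, M' ≤ X x := by
      intro x hx
      by_contra hxx; push_neg at hxx
      have hxS : x ∈ S := ⟨⟨le_trans hs0 hx.1.le, hx.2.le⟩, hxx.le⟩
      exact absurd (le_csSup hScomp.bddAbove hxS) (not_le.2 hx.1)
    have := key s hs0 hst hgt
    have hrr : 0 ≤ r * (t₁ - s) := by nlinarith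
    have : X t₁ ≤ M' := by nlinarith
    linarith
  · have := key t₀ le_rfl ht01 (fun x hx => by
      by_contra hxx; push_neg at hxx
      exact hne ⟨x, ⟨⟨hx.1.le, hx.2.le⟩, hxx.le⟩⟩)
    have : X t₁ ≤ X t₀ := by nlinarith
    linarith

lemma myHit {X X' : ℝ → ℝ} {M' r : ℝ}
    (hd : ∀ t ∈ Ici (0:ℝ), HasDerivWithinAt X (X' t) (Ici 0) t)
    (hr : 0 < r)
    (hdec : ∀ t ∈ Ici (0:ℝ), M' ≤ X t → X' t ≤ -r) :
    ∃ t₀, 0 ≤ t₀ ∧ X t₀ ≤ M' := by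
  by_contra hcon
  push_neg at hcon
  have hgt : ∀ t, 0 ≤ t → M' < X t := fun t ht => hcon t ht
  have hanti : AntitoneOn (fun t => X t + r * t) (Ici 0) := by
    apply myAntitoneOn (u' := fun t => X' t + r) (convex_Ici 0)
    · intro t ht
      exact ((hd t ht).add ((hasDerivWithinAt_id t _).const_mul r)).congr_deriv (by ring)
    · intro t ht
      rw [interior_Ici] at ht
      have := hdec t (mem_Ici.2 ht.le) (hgt t ht.le).le
      linarith
  set T := (X 0 - M') / r + 1 with hT
  have hT0 : 0 ≤ T := by
    have := hgt 0 le_rfl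
    have : 0 < X 0 - M' := by linarith
    positivity
  have hmono := hanti (self_mem_Ici) (show T ∈ Ici (0:ℝ) from hT0) hT0
  simp only at hmono
  have hXT : X T ≤ X 0 - r * T := by linarith
  have hrT : r * T = (X 0 - M') + r := by
    rw [hT]; field_simp
  have := hgt T hT0
  linarith

lemma myDecay {g a g' a' σ : ℝ → ℝ} {T c θ C₁ : ℝ}
    (hc : 0 < c) (hθ : 0 ≤ θ) (hC₁ : 0 < C₁)
    (hdg : ∀ t ∈ Ici T, HasDerivWithinAt g (g' t) (Ici T) t)
    (hda : ∀ t ∈ Ici T, HasDerivWithinAt a (a' t) (Ici T) t)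
    (hg0 : ∀ t, 0 ≤ g t) (ha0 : ∀ t ∈ Ici T, 0 < a t) (haC : ∀ t ∈ Ici T, a t ≤ C₁)
    (hgb : ∀ t ∈ Ici T, g' t ≤ (θ * σ t - c) * g t)
    (hab : ∀ t ∈ Ici T, σ t * a t ≤ a' t) :
    Tendsto g atTop (nhds 0) := by
  set u : ℝ → ℝ := fun t => g t * Real.exp (c * (t - T) - θ * Real.log (a t)) with hu
  have hud : ∀ t ∈ Ici T, HasDerivWithinAt u
      (g' t * Real.exp (c * (t - T) - θ * Real.log (a t)) +
        g t * (Real.exp (c * (t - T) - θ * Real.log (a t)) * (c - θ * (a' t / a t))))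
      (Ici T) t := by
    intro t ht
    have hin : HasDerivWithinAt (fun s => c * (s - T) - θ * Real.log (a s))
        (c - θ * (a' t / a t)) (Ici T) t := by
      have h1 : HasDerivWithinAt (fun s => c * (s - T)) c (Ici T) t :=
        (((hasDerivWithinAt_id t _).sub_const T).const_mul c).congr_deriv (by ring)
      have h2 : HasDerivWithinAt (fun s => Real.log (a s)) (a' t / a t) (Ici T) t :=
        (hda t ht).log (ne_of_gt (ha0 t ht))
      exact h1.sub (h2.const_mul θ) |>.congr_deriv (by ring)
    exact ((hdg t ht).mul hin.exp).congr_deriv (by ring)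
  have hanti : AntitoneOn u (Ici T) := by
    apply myAntitoneOn (convex_Ici T)
        (u' := fun t => g' t * Real.exp (c * (t - T) - θ * Real.log (a t)) +
          g t * (Real.exp (c * (t - T) - θ * Real.log (a t)) * (c - θ * (a' t / a t)))) hud
    intro t ht
    rw [interior_Ici] at ht
    have ht' : t ∈ Ici T := mem_Ici.2 ht.le
    set E := Real.exp (c * (t - T) - θ * Real.log (a t)) with hE
    have hEpos : 0 < E := Real.exp_pos _
    have h1 : g' t * E ≤ (θ * σ t - c) * g t * E :=
      mul_le_mul_of_nonneg_right (hgb t ht') hEpos.le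
    have h2 : σ t ≤ a' t / a t := (le_div_iff₀ (ha0 t ht')).2 (hab t ht')
    have h3 : θ * σ t * g t * E ≤ θ * (a' t / a t) * g t * E := by
      apply mul_le_mul_of_nonneg_right _ hEpos.le
      apply mul_le_mul_of_nonneg_right _ (hg0 t)
      exact mul_le_mul_of_nonneg_left h2 hθ
    nlinarith [hg0 t, hEpos]
  have hbound : ∀ t ∈ Ici T, g t ≤ u T * Real.exp (θ * Real.log C₁) * Real.exp (-(c * (t - T))) := by
    intro t ht
    have huT : u t ≤ u T := hanti (self_mem_Ici) ht ht
    have e1 : Real.exp (c * (t - T) - θ * Real.log (a t)) *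
        Real.exp (θ * Real.log (a t) - c * (t - T)) = 1 := by
      rw [← Real.exp_add, show (c * (t - T) - θ * Real.log (a t)) +
        (θ * Real.log (a t) - c * (t - T)) = 0 by ring, Real.exp_zero]
    have hgt : g t = u t * Real.exp (θ * Real.log (a t) - c * (t - T)) := by
      calc g t = g t * (Real.exp (c * (t - T) - θ * Real.log (a t)) *
            Real.exp (θ * Real.log (a t) - c * (t - T))) := by rw [e1, mul_one]
        _ = u t * Real.exp (θ * Real.log (a t) - c * (t - T)) := by rw [hu]; ring
    have huT0 : 0 ≤ u T := mul_nonneg (hg0 T) (Real.exp_pos _).le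
    have h1 : Real.exp (θ * Real.log (a t) - c * (t - T)) ≤
        Real.exp (θ * Real.log C₁ - c * (t - T)) := by
      apply Real.exp_le_exp.2
      have hlog : Real.log (a t) ≤ Real.log C₁ := Real.log_le_log (ha0 t ht) (haC t ht)
      nlinarith
    calc g t = u t * Real.exp (θ * Real.log (a t) - c * (t - T)) := hgt
      _ ≤ u T * Real.exp (θ * Real.log (a t) - c * (t - T)) :=
        mul_le_mul_of_nonneg_right huT (Real.exp_pos _).le
      _ ≤ u T * Real.exp (θ * Real.log C₁ - c * (t - T)) :=
        mul_le_mul_of_nonneg_left h1 huT0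
      _ = u T * Real.exp (θ * Real.log C₁) * Real.exp (-(c * (t - T))) := by
        have e2 : Real.exp (θ * Real.log C₁ - c * (t - T)) =
            Real.exp (θ * Real.log C₁) * Real.exp (-(c * (t - T))) := by
          rw [← Real.exp_add]; congr 1
        rw [e2, ← mul_assoc]
  have hlim : Tendsto (fun t => u T * Real.exp (θ * Real.log C₁) *
      Real.exp (-(c * (t - T)))) atTop (nhds 0) := by
    have h2 : Tendsto (fun t : ℝ => -(c * (t - T))) atTop atBot := by
      apply Filter.tendsto_neg_atBot_iff.mpr
      exact Tendsto.const_mul_atTop hc (tendsto_atTop_add_const_right atTop (-T) tendsto_id)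
    have h3 : Tendsto (fun t : ℝ => Real.exp (-(c * (t - T)))) atTop (nhds 0) :=
      Real.tendsto_exp_atBot.comp h2
    simpa using h3.const_mul (u T * Real.exp (θ * Real.log C₁))
  apply tendsto_of_tendsto_of_tendsto_of_le_of_le' tendsto_const_nhds hlim
  · exact Filter.Eventually.of_forall hg0
  · filter_upwards [Filter.eventually_ge_atTop T] with t ht
    exact hbound t ht

end Helpers

set_option maxHeartbeats 2000000 in
/-- if `q̆ ∉ [𝔔]_R` then there is `δ > 0` such that
`μ(t)(B_δ(q̆)) → 0` as `t → ∞`. -/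
theorem pureSelection_extinction_around_unfit_strategy
    {Q : Type*} [MetricSpace Q] [CompactSpace Q] [MeasurableSpace Q] [BorelSpace Q]
    (M : EGTRates Q) (𝔔 𝔮 : Q) (hA : M.Assumptions 𝔔 𝔮)
    (μ : ℝ → Measure Q) (hμ : IsPureSelectionSolution M μ)
    (hsupp : (msupport (μ 0) ∩ M.fittestClass 𝔔).Nonempty)
    (qb : Q) (hqb : qb ∉ M.fittestClass 𝔔) :
    ∃ δ : ℝ, 0 < δ ∧
      Filter.Tendsto (fun t => ((μ t) (Metric.ball qb δ)).toReal) Filter.atTop (nhds 0) := by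
  classical
  obtain ⟨ϖ, hϖpos, hϖ⟩ := M.f₂_inf_pos
  obtain ⟨hfin, hder⟩ := hμ
  set X : ℝ → ℝ := fun t => (μ t Set.univ).toReal with hXdef
  -- basic positivity facts
  have hf2pos : ∀ Y : ℝ, 0 ≤ Y → ∀ q, 0 < M.f₂ Y q := by
    intro Y hY q
    calc (0:ℝ) < ϖ := hϖpos
      _ ≤ M.f₂ 0 q := hϖ q
      _ ≤ M.f₂ Y q := M.f₂_mono q (self_mem_Ici) hY hY
  have hf2ge : ∀ Y : ℝ, 0 ≤ Y → ∀ q, ϖ ≤ M.f₂ Y q := by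
    intro Y hY q
    calc ϖ ≤ M.f₂ 0 q := hϖ q
      _ ≤ M.f₂ Y q := M.f₂_mono q (self_mem_Ici) hY hY
  have hf1mul : ∀ Y : ℝ, 0 ≤ Y → ∀ q, M.f₁ Y q = M.R Y q * M.f₂ Y q := by
    intro Y hY q
    rw [EGTRates.R, div_mul_cancel₀ _ (ne_of_gt (hf2pos Y hY q))]
  have hRanti : ∀ q : Q, ∀ x y : ℝ, 0 ≤ x → x ≤ y → M.R y q ≤ M.R x q := by
    intro q x y hx hxy
    have hy : (0:ℝ) ≤ y := le_trans hx hxy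
    exact div_le_div₀ (M.f₁_nonneg x q) (M.f₁_anti q hx hy hxy) (hf2pos x hx q)
      (M.f₂_mono q hx hy hxy)
  obtain ⟨hmax, hmin, hA3, hA4, hA5Q, hA5q⟩ := hA
  have hRle : ∀ q : Q, ∀ Y : ℝ, 0 ≤ Y → M.R Y q ≤ M.R Y 𝔔 := by
    intro q Y hY
    rcases eq_or_lt_of_le (hmax q) with heq | hlt
    · exact le_of_eq ((hA4 q 𝔔 Y hY).2 heq)
    · exact ((hA4 𝔔 q Y hY).1 hlt).le
  -- continuity facts
  have hcont1 : Continuous fun P : ℝ × Q => M.f₁ P.1 P.2 := jointCont _ M.f₁_lip M.f₁_cont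
  have hcont2 : Continuous fun P : ℝ × Q => M.f₂ P.1 P.2 := jointCont _ M.f₂_lip M.f₂_cont
  have hconth : Continuous fun P : ℝ × Q => M.f₁ P.1 P.2 - M.f₂ P.1 P.2 := hcont1.sub hcont2
  -- measure facts
  have hXnn : ∀ t, 0 ≤ X t := fun t => ENNReal.toReal_nonneg
  have hmE : ∀ t (E : Set Q), (μ t E).toReal ≤ X t := by
    intro t E
    haveI := hfin t
    exact ENNReal.toReal_mono (measure_ne_top _ _) (measure_mono (subset_univ _))
  have hEnn : ∀ t (E : Set Q), 0 ≤ (μ t E).toReal := fun _ _ => ENNReal.toReal_nonneg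
  have hintg : ∀ t : ℝ, ∀ E : Set Q,
      IntegrableOn (fun q => M.f₁ (X t) q - M.f₂ (X t) q) E (μ t) := by
    intro t E
    haveI := hfin t
    have hcont : Continuous fun q => M.f₁ (X t) q - M.f₂ (X t) q :=
      ((M.f₁_cont (X t)).sub (M.f₂_cont (X t)))
    exact (hcont.continuousOn.integrableOn_compact isCompact_univ).mono_set (subset_univ E)
  have hDb : ∀ t : ℝ, ∀ E : Set Q, MeasurableSet E → ∀ β : ℝ,
      (∀ q ∈ E, M.f₁ (X t) q - M.f₂ (X t) q ≤ β) →
      (∫ q in E, (M.f₁ (X t) q - M.f₂ (X t) q) ∂(μ t)) ≤ β * (μ t E).toReal := by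
    intro t E hE β hb
    haveI := hfin t
    calc (∫ q in E, (M.f₁ (X t) q - M.f₂ (X t) q) ∂(μ t))
        ≤ ∫ _ in E, β ∂(μ t) := by
          apply setIntegral_mono_on (hintg t E)
            (integrableOn_const (measure_ne_top _ _)) hE hb
      _ = (μ t E).toReal * β := by rw [setIntegral_const, smul_eq_mul]; rfl
      _ = β * (μ t E).toReal := by ring
  have hDlb : ∀ t : ℝ, ∀ E : Set Q, MeasurableSet E → ∀ β : ℝ,
      (∀ q ∈ E, β ≤ M.f₁ (X t) q - M.f₂ (X t) q) →
      β * (μ t E).toReal ≤ ∫ q in E, (M.f₁ (X t) q - M.f₂ (X t) q) ∂(μ t) := by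
    intro t E hE β hb
    haveI := hfin t
    calc β * (μ t E).toReal = (μ t E).toReal * β := by ring
      _ = ∫ _ in E, β ∂(μ t) := by rw [setIntegral_const, smul_eq_mul]; rfl
      _ ≤ ∫ q in E, (M.f₁ (X t) q - M.f₂ (X t) q) ∂(μ t) := by
          apply setIntegral_mono_on
            (integrableOn_const (measure_ne_top _ _)) (hintg t E) hE hb
  have hderivE : ∀ E : Set Q, MeasurableSet E → ∀ t ∈ Ici (0:ℝ),
      HasDerivWithinAt (fun s => (μ s E).toReal)
        (∫ q in E, (M.f₁ (X t) q - M.f₂ (X t) q) ∂(μ t)) (Ici 0) t :=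
    fun E hE t ht => hder t ht E hE
  -- pointwise monotone bound: h (X t) q ≤ h 0 q for X t ≥ 0
  have hmonoh : ∀ x : ℝ, 0 ≤ x → ∀ q : Q,
      M.f₁ x q - M.f₂ x q ≤ M.f₁ 0 q - M.f₂ 0 q := by
    intro x hx q
    have h1 := M.f₁_anti q (self_mem_Ici) hx hx
    have h2 := M.f₂_mono q (self_mem_Ici) hx hx
    simp only at h1 h2
    linarith
  by_cases hcase : M.R 0 qb < 1
  · -- Case 1: R(0,qb) < 1 : direct exponential decay
    have hval : M.f₁ 0 qb < M.f₂ 0 qb := by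
      rw [EGTRates.R, div_lt_one (hf2pos 0 le_rfl qb)] at hcase
      exact hcase
    set c : ℝ := (M.f₂ 0 qb - M.f₁ 0 qb)/2 with hcdef
    have hcpos : 0 < c := by simp only [hcdef]; linarith
    have hcq := ((M.f₁_cont 0).sub (M.f₂_cont 0)).continuousAt (x := qb)
    rw [Metric.continuousAt_iff] at hcq
    obtain ⟨δB, hδB, hballB⟩ := hcq c hcpos
    have hBbound : ∀ q ∈ Metric.ball qb δB, M.f₁ 0 q - M.f₂ 0 q ≤ -c := by
      intro q hq
      have := hballB (Metric.mem_ball.1 hq)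
      rw [Real.dist_eq, abs_lt] at this
      have : M.f₁ 0 q - M.f₂ 0 q < (M.f₁ 0 qb - M.f₂ 0 qb) + c := by simp only [Pi.sub_apply] at this; linarith [this.2]
      simp only [hcdef] at this ⊢
      linarith
    refine ⟨δB, hδB, ?_⟩
    apply myDecay (T := 0) (c := c) (θ := 0) (C₁ := 1)
      (a := fun _ => 1) (a' := fun _ => 0) (σ := fun _ => 0)
      (g' := fun t => ∫ q in Metric.ball qb δB, (M.f₁ (X t) q - M.f₂ (X t) q) ∂(μ t))
      hcpos le_rfl one_pos
    · exact fun t ht => hderivE _ measurableSet_ball t ht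
    · exact fun t ht => hasDerivWithinAt_const t _ (1:ℝ)
    · exact fun t => hEnn t _
    · exact fun t _ => one_pos
    · exact fun t _ => le_rfl
    · intro t ht
      have : (∫ q in Metric.ball qb δB, (M.f₁ (X t) q - M.f₂ (X t) q) ∂(μ t)) ≤
          -c * (μ t (Metric.ball qb δB)).toReal := by
        apply hDb t _ measurableSet_ball
        intro q hq
        exact le_trans (hmonoh (X t) (hXnn t) q) (hBbound q hq)
      calc (∫ q in Metric.ball qb δB, (M.f₁ (X t) q - M.f₂ (X t) q) ∂(μ t))
          ≤ -c * (μ t (Metric.ball qb δB)).toReal := this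
        _ = (0 * 0 - c) * (μ t (Metric.ball qb δB)).toReal := by ring
    · intro t ht
      simp
  · 
    -- Case 2 : 1 ≤ R(0,qb) < R(0,𝔔)
    push_neg at hcase
    have hlt : M.R 0 qb < M.R 0 𝔔 := by
      refine lt_of_le_of_ne (hmax qb) ?_
      intro heq
      exact hqb heq
    have h1Q : 1 < M.R 0 𝔔 := lt_of_le_of_lt hcase hlt
    set K := M.carCap 𝔔 with hKdef
    have hK1 : M.R K 𝔔 = 1 := (hA5Q h1Q.le).1
    have hKuniq : ∀ x : ℝ, 0 ≤ x → M.R x 𝔔 = 1 → x = K := (hA5Q h1Q.le).2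
    have hK0 : 0 ≤ K := by
      rw [hKdef, EGTRates.carCap, if_pos h1Q.le]
      obtain ⟨x₀, hx₀0, hx₀⟩ := hA3
      exact le_csInf ⟨x₀, hx₀0, hx₀⟩ (fun b hb => hb.1)
    have hKpos : 0 < K := by
      rcases eq_or_lt_of_le hK0 with heq | h
      · exfalso; rw [← heq] at hK1; rw [← hK1] at h1Q; exact lt_irrefl _ h1Q
      · exact h
    -- the fittest strategy in the support
    obtain ⟨p, hpsupp, hpfit⟩ := hsupp
    have hpfit' : M.R 0 p = M.R 0 𝔔 := hpfit
    have hRp : ∀ Y : ℝ, 0 ≤ Y → M.R Y p = M.R Y 𝔔 := fun Y hY => (hA4 p 𝔔 Y hY).2 hpfit'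
    -- R(K, qb) < 1
    have hRqbK : M.R K qb < 1 := by
      have := (hA4 𝔔 qb K hK0).1 hlt
      rwa [hK1] at this
    -- choice of c
    have hvalK : M.f₁ K qb < M.f₂ K qb := by
      rw [EGTRates.R, div_lt_one (hf2pos K hK0 qb)] at hRqbK
      exact hRqbK
    set c : ℝ := (M.f₂ K qb - M.f₁ K qb)/3 with hcdef
    have hcpos : 0 < c := by simp only [hcdef]; linarith
    have hhK : M.f₁ K qb - M.f₂ K qb = -(3*c) := by simp only [hcdef]; ring
    -- choice of the ball around qb and ε₁
    have hcq := hconth.continuousAt (x := ((K : ℝ), qb))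
    rw [Metric.continuousAt_iff] at hcq
    obtain ⟨δ', hδ', hball'⟩ := hcq c hcpos
    set ε₁ : ℝ := min (δ'/2) (K/2) with hε₁def
    have hε₁pos : 0 < ε₁ := lt_min (by linarith) (by linarith)
    set δB : ℝ := δ'/2 with hδBdef
    have hδBpos : 0 < δB := by simp only [hδBdef]; linarith
    have hballB : ∀ x ∈ Icc (K - ε₁) (K + ε₁), ∀ q ∈ Metric.ball qb δB,
        M.f₁ x q - M.f₂ x q ≤ -(2*c) := by
      intro x hx q hq
      have hd : dist ((x, q) : ℝ × Q) (K, qb) < δ' := by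
        rw [Prod.dist_eq]
        apply max_lt
        · rw [Real.dist_eq, abs_lt]
          have h1 := hx.1; have h2 := hx.2
          have h3 : ε₁ ≤ δ'/2 := min_le_left _ _
          constructor <;> linarith
        · calc dist q qb < δB := Metric.mem_ball.1 hq
            _ < δ' := by simp only [hδBdef]; linarith
      have := hball' hd
      rw [Real.dist_eq, abs_lt] at this
      simp only at this
      linarith [this.2, hhK.le, hhK.ge]
    -- continuity of R(·,𝔔) on Ici 0
    have hcf1 : Continuous fun x : ℝ => M.f₁ x 𝔔 :=
      hcont1.comp (continuous_id.prodMk continuous_const)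
    have hcf2 : Continuous fun x : ℝ => M.f₂ x 𝔔 :=
      hcont2.comp (continuous_id.prodMk continuous_const)
    have hcontR : ContinuousOn (fun x : ℝ => M.R x 𝔔) (Ici 0) := by
      apply ContinuousOn.div hcf1.continuousOn hcf2.continuousOn
      intro x hx
      exact ne_of_gt (hf2pos x hx 𝔔)
    -- η : minimum of R - 1 on [0, K - ε₁]
    have hKε₁ : 0 < K - ε₁ := by
      have := min_le_right (δ'/2) (K/2)
      simp only [hε₁def]
      linarith [min_le_right (δ'/2) (K/2)]
    have hIccne : (Icc (0:ℝ) (K - ε₁)).Nonempty := ⟨0, le_rfl, hKε₁.le⟩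
    obtain ⟨xm, hxm, hxmmin'⟩ := isCompact_Icc.exists_isMinOn hIccne
      (hcontR.mono (fun x hx => hx.1))
    have hxmmin : ∀ x ∈ Icc (0:ℝ) (K - ε₁), M.R xm 𝔔 ≤ M.R x 𝔔 := fun x hx => hxmmin' hx
    set η : ℝ := M.R xm 𝔔 - 1 with hηdef
    have hηpos : 0 < η := by
      have h1 : 1 ≤ M.R xm 𝔔 := by
        rw [← hK1]
        exact hRanti 𝔔 xm K hxm.1 (by linarith [hxm.2])
      rcases eq_or_lt_of_le h1 with heq | h
      · exfalso
        have := hKuniq xm hxm.1 heq.symm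
        rw [this] at hxm
        linarith [hxm.2]
      · simp only [hηdef]; linarith
    have hηmin : ∀ x ∈ Icc (0:ℝ) (K - ε₁), 1 + η ≤ M.R x 𝔔 := by
      intro x hx
      have := hxmmin x hx
      simp only [hηdef]; linarith
    -- C₂ : maximum of f₁(0,·)
    have huniv : (Set.univ : Set Q).Nonempty := ⟨qb, trivial⟩
    obtain ⟨qm, _, hqm⟩ := isCompact_univ.exists_isMaxOn huniv (M.f₁_cont 0).continuousOn
    set C₂ : ℝ := M.f₁ 0 qm with hC₂def
    have hC₂ : ∀ q : Q, M.f₁ 0 q ≤ C₂ := fun q => hqm (mem_univ q)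
    have hC₂0 : 0 ≤ C₂ := le_trans (M.f₁_nonneg 0 qb) (hC₂ qb)
    -- θ
    set ρ : ℝ := ϖ * η / 2 with hρdef
    have hρpos : 0 < ρ := by simp only [hρdef]; positivity
    set θ : ℝ := (C₂ + c) / ρ with hθdef
    have hθpos : 0 < θ := by simp only [hθdef]; positivity
    have hθρ : θ * ρ = C₂ + c := by
      simp only [hθdef]; field_simp
    -- F : maximum of f₂ on [0, K+ε₁] × Q
    have hmemK : (0:ℝ) ≤ K + ε₁ := by positivity
    have hmem0 : ((0:ℝ), qb) ∈ (Icc (0:ℝ) (K + ε₁)) ×ˢ (Set.univ : Set Q) :=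
      ⟨⟨le_rfl, hmemK⟩, trivial⟩
    obtain ⟨Pm, _, hPm⟩ := (isCompact_Icc.prod isCompact_univ).exists_isMaxOn
      ⟨_, hmem0⟩ hcont2.continuousOn
    set F : ℝ := M.f₂ Pm.1 Pm.2 with hFdef
    have hF : ∀ x ∈ Icc (0:ℝ) (K + ε₁), ∀ q : Q, M.f₂ x q ≤ F := by
      intro x hx q
      have : ((x,q) : ℝ × Q) ∈ (Icc (0:ℝ) (K + ε₁)) ×ˢ (Set.univ : Set Q) := ⟨hx, trivial⟩
      exact hPm this
    have hFpos : 0 < F :=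
      lt_of_lt_of_le (hf2pos 0 le_rfl qb) (hF 0 ⟨le_rfl, hmemK⟩ qb)
    -- choice of ε
    have hc2θF : 0 < c / (2 * θ * F) := by positivity
    have hcwR := (hcontR K (le_of_lt hKpos))
    rw [Metric.continuousWithinAt_iff] at hcwR
    obtain ⟨δ'', hδ'', hRnear⟩ := hcwR _ hc2θF
    set ε : ℝ := min ε₁ (δ''/2) with hεdef
    have hεpos : 0 < ε := lt_min hε₁pos (by linarith)
    have hεε₁ : ε ≤ ε₁ := min_le_left _ _
    have hRKε : 1 - c / (2 * θ * F) < M.R (K + ε) 𝔔 := by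
      have hmem : K + ε ∈ Ici (0:ℝ) := by
        simp only [mem_Ici]; linarith
      have hd : dist (K + ε) K < δ'' := by
        rw [Real.dist_eq]
        have : |K + ε - K| = ε := by
          rw [show K + ε - K = ε by ring, abs_of_pos hεpos]
        rw [this]
        calc ε ≤ δ''/2 := min_le_right _ _
          _ < δ'' := by linarith
      have := hRnear hmem hd
      rw [Real.dist_eq, abs_lt, hK1] at this
      linarith [this.1]
    -- κ and the ball around p
    set κ : ℝ := min ρ (c / (2 * θ)) with hκdef
    have hκpos : 0 < κ := lt_min hρpos (by positivity)
    have hUC := (isCompact_Icc.prod isCompact_univ :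
        IsCompact ((Icc (0:ℝ) (K + ε₁)) ×ˢ (Set.univ : Set Q))).uniformContinuousOn_of_continuous
      hconth.continuousOn
    rw [Metric.uniformContinuousOn_iff] at hUC
    obtain ⟨δA, hδApos, hAclose'⟩ := hUC κ hκpos
    have hAclose : ∀ x ∈ Icc (0:ℝ) (K + ε), ∀ q ∈ Metric.ball p δA,
        |(M.f₁ x q - M.f₂ x q) - (M.f₁ x p - M.f₂ x p)| ≤ κ := by
      intro x hx q hq
      have hx' : x ∈ Icc (0:ℝ) (K + ε₁) := ⟨hx.1, by linarith [hx.2]⟩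
      have hd : dist ((x, q) : ℝ × Q) (x, p) < δA := by
        rw [Prod.dist_eq]
        simp only [dist_self]
        rw [max_lt_iff]
        exact ⟨hδApos, Metric.mem_ball.1 hq⟩
      have := hAclose' (x, q) ⟨hx', trivial⟩ (x, p) ⟨hx', trivial⟩ hd
      rw [Real.dist_eq] at this
      exact this.le
    -- the total-population dynamics
    set X' : ℝ → ℝ :=
      fun t => ∫ q in Set.univ, (M.f₁ (X t) q - M.f₂ (X t) q) ∂(μ t) with hX'def
    have hdX : ∀ t ∈ Ici (0:ℝ), HasDerivWithinAt X (X' t) (Ici 0) t :=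
      fun t ht => hderivE Set.univ MeasurableSet.univ t ht
    set β2 : ℝ := 1 - M.R (K + ε/2) 𝔔 with hβ2def
    have hβ2 : 0 < β2 := by
      have h1 : M.R (K + ε/2) 𝔔 ≤ 1 := by
        rw [← hK1]; exact hRanti 𝔔 K (K + ε/2) hK0 (by linarith)
      rcases eq_or_lt_of_le h1 with heq | h
      · exfalso
        have h2 := hKuniq (K + ε/2) (by linarith only [hKpos, hεpos]) heq
        linarith only [h2, hεpos]
      · simp only [hβ2def]; linarith only [h]
    set r : ℝ := β2 * ϖ * (K + ε/2) with hrdef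
    have hrpos : 0 < r := by
      have : 0 < K + ε/2 := by linarith only [hKpos, hεpos]
      simp only [hrdef]; positivity
    have hdecX : ∀ t ∈ Ici (0:ℝ), K + ε/2 ≤ X t → X' t ≤ -r := by
      intro t ht hXt
      have hXt0 : 0 ≤ X t := hXnn t
      have hpt : ∀ q : Q, M.f₁ (X t) q - M.f₂ (X t) q ≤ -(β2 * ϖ) := by
        intro q
        have hRq : M.R (X t) q ≤ 1 - β2 := by
          calc M.R (X t) q ≤ M.R (X t) 𝔔 := hRle q _ hXt0
            _ ≤ M.R (K + ε/2) 𝔔 := hRanti 𝔔 (K + ε/2) (X t) (by linarith only [hKpos, hεpos]) hXt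
            _ = 1 - β2 := by simp only [hβ2def]; ring
        have hf2q : ϖ ≤ M.f₂ (X t) q := hf2ge _ hXt0 q
        have hf1q : M.f₁ (X t) q = M.R (X t) q * M.f₂ (X t) q := hf1mul _ hXt0 q
        have hf2q0 := hf2pos (X t) hXt0 q
        have e1 : 0 ≤ (1 - β2 - M.R (X t) q) * M.f₂ (X t) q :=
          mul_nonneg (by linarith only [hRq]) hf2q0.le
        have e2 : 0 ≤ β2 * (M.f₂ (X t) q - ϖ) :=
          mul_nonneg hβ2.le (by linarith only [hf2q])
        rw [hf1q]
        linarith only [e1, e2]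
      have hint := hDb t Set.univ MeasurableSet.univ (-(β2 * ϖ)) (fun q _ => hpt q)
      calc X' t ≤ -(β2 * ϖ) * (μ t Set.univ).toReal := hint
        _ = -(β2 * ϖ) * X t := rfl
        _ ≤ -r := by
            have e3 : 0 ≤ (β2 * ϖ) * (X t - (K + ε/2)) :=
              mul_nonneg (by positivity) (by linarith only [hXt])
            simp only [hrdef]
            linarith only [e3]
    obtain ⟨T, hT0, hTM'⟩ := myHit hdX hrpos hdecX
    have hXev : ∀ t, T ≤ t → X t ≤ K + ε := by
      intro t ht
      have := myBarrier hdX hrpos (show K + ε/2 < K + ε by linarith only [hεpos]) hdecX hT0 ht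
      rwa [max_eq_right (by linarith only [hTM', hεpos] : X T ≤ K + ε)] at this
    set C₀ : ℝ := max (X 0) (K + ε) with hC₀def
    have hC₀0 : 0 ≤ C₀ := le_trans (hXnn 0) (le_max_left _ _)
    have hXglob : ∀ t, 0 ≤ t → X t ≤ C₀ :=
      fun t ht => myBarrier hdX hrpos (show K + ε/2 < K + ε by linarith only [hεpos]) hdecX le_rfl ht
    -- lower bound -Λ for the growth rate
    have hmem1 : ((0:ℝ), qb) ∈ (Icc (0:ℝ) C₀) ×ˢ (Set.univ : Set Q) :=
      ⟨⟨le_rfl, hC₀0⟩, trivial⟩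
    obtain ⟨Pl, _, hPl⟩ := (isCompact_Icc.prod isCompact_univ).exists_isMaxOn
      ⟨_, hmem1⟩ hconth.neg.continuousOn
    set Λ : ℝ := -(M.f₁ Pl.1 Pl.2 - M.f₂ Pl.1 Pl.2) with hΛdef
    have hΛ : ∀ x ∈ Icc (0:ℝ) C₀, ∀ q : Q, -Λ ≤ M.f₁ x q - M.f₂ x q := by
      intro x hx q
      have hmem2 : ((x, q) : ℝ × Q) ∈ (Icc (0:ℝ) C₀) ×ˢ (Set.univ : Set Q) := ⟨hx, trivial⟩
      have h5 := hPl hmem2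
      have h6 : -(M.f₁ x q - M.f₂ x q) ≤ -(M.f₁ Pl.1 Pl.2 - M.f₂ Pl.1 Pl.2) := h5
      simp only [hΛdef]
      linarith only [h6]
    -- the measure of the ball around p stays positive
    set a : ℝ → ℝ := fun t => (μ t (Metric.ball p δA)).toReal with hadef
    set a' : ℝ → ℝ :=
      fun t => ∫ q in Metric.ball p δA, (M.f₁ (X t) q - M.f₂ (X t) q) ∂(μ t) with ha'def
    have hda : ∀ t ∈ Ici (0:ℝ), HasDerivWithinAt a (a' t) (Ici 0) t :=
      fun t ht => hderivE _ measurableSet_ball t ht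
    have ha'lb : ∀ t ∈ Ici (0:ℝ), -Λ * a t ≤ a' t := by
      intro t ht
      exact hDlb t _ measurableSet_ball (-Λ)
        (fun q _ => hΛ (X t) ⟨hXnn t, hXglob t ht⟩ q)
    have ha0pos : 0 < a 0 := by
      have h1 : 0 < μ 0 (Metric.ball p δA) := hpsupp δA hδApos
      haveI := hfin 0
      exact ENNReal.toReal_pos (ne_of_gt h1) (measure_ne_top _ _)
    have hw : MonotoneOn (fun t => a t * Real.exp (Λ * t)) (Ici 0) := by
      apply myMonotoneOn (convex_Ici 0)
        (u' := fun t => a' t * Real.exp (Λ * t) + a t * (Real.exp (Λ * t) * Λ))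
      · intro t ht
        exact ((hda t ht).mul
          (((hasDerivWithinAt_id t _).const_mul Λ).exp)).congr_deriv
          (by simp only [id_eq]; ring)
      · intro t ht
        rw [interior_Ici] at ht
        have h1 := ha'lb t (mem_Ici.2 ht.le)
        have hE := Real.exp_pos (Λ * t)
        have e1 : 0 ≤ (a' t + Λ * a t) * Real.exp (Λ * t) :=
          mul_nonneg (by linarith only [h1]) hE.le
        linarith only [e1]
    have hapos : ∀ t, 0 ≤ t → 0 < a t := by
      intro t ht
      have h1 := hw (self_mem_Ici) (show t ∈ Ici (0:ℝ) from ht) ht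
      simp only [mul_zero, Real.exp_zero, mul_one] at h1
      by_contra hneg
      push_neg at hneg
      have h2 := mul_nonpos_of_nonpos_of_nonneg hneg (Real.exp_pos (Λ * t)).le
      linarith only [h1, h2, ha0pos]
    -- the master pointwise inequality
    have hmaster : ∀ x ∈ Icc (0:ℝ) (K + ε), ∀ q ∈ Metric.ball qb δB,
        M.f₁ x q - M.f₂ x q ≤ θ * ((M.f₁ x p - M.f₂ x p) - κ) - c := by
      intro x hx q hq
      have hx0 := hx.1
      rcases le_or_gt x (K - ε₁) with hxI | hxII
      · -- Region I : small X, strong growth at p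
        have hRx : 1 + η ≤ M.R x 𝔔 := hηmin x ⟨hx0, hxI⟩
        have hRxp : M.R x p = M.R x 𝔔 := hRp x hx0
        have hf2p : ϖ ≤ M.f₂ x p := hf2ge x hx0 p
        have hf1p : M.f₁ x p = M.R x p * M.f₂ x p := hf1mul x hx0 p
        have hhp : ϖ * η ≤ M.f₁ x p - M.f₂ x p := by
          have e1 : 0 ≤ (M.R x 𝔔 - (1+η)) * M.f₂ x p :=
            mul_nonneg (by linarith only [hRx]) (hf2pos x hx0 p).le
          have e2 : 0 ≤ η * (M.f₂ x p - ϖ) :=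
            mul_nonneg hηpos.le (by linarith only [hf2p])
          rw [hf1p, hRxp]
          linarith only [e1, e2]
        have hκρ : κ ≤ ρ := min_le_left _ _
        have hgoal1 : θ * ρ ≤ θ * ((M.f₁ x p - M.f₂ x p) - κ) := by
          apply mul_le_mul_of_nonneg_left _ hθpos.le
          have e3 : ϖ * η = 2 * ρ := by simp only [hρdef]; ring
          linarith only [e3, hhp, hκρ]
        have hhq : M.f₁ x q - M.f₂ x q ≤ C₂ := by
          have h1 := M.f₁_anti q (self_mem_Ici) (mem_Ici.2 hx0) hx0
          have h2 := M.f₂_nonneg x q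
          have h3 := hC₂ q
          simp only at h1
          linarith only [h1, h2, h3]
        linarith only [hθρ, hgoal1, hhq]
      · -- Region II : X near the carrying capacity
        have hxu : x ≤ K + ε := hx.2
        have hq2 : M.f₁ x q - M.f₂ x q ≤ -(2*c) :=
          hballB x ⟨by linarith only [hxII], by linarith only [hxu, hεε₁]⟩ q hq
        have hp2 : -(c/(2*θ)) ≤ M.f₁ x p - M.f₂ x p := by
          rcases le_or_gt x K with hxK | hxK
          · have hR1 : (1:ℝ) ≤ M.R x p := by
              rw [hRp x hx0, ← hK1]; exact hRanti 𝔔 x K hx0 hxK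
            have hf1p : M.f₁ x p = M.R x p * M.f₂ x p := hf1mul x hx0 p
            have hf2p := hf2pos x hx0 p
            have e1 : 0 ≤ (M.R x p - 1) * M.f₂ x p :=
              mul_nonneg (by linarith only [hR1]) hf2p.le
            have h1 : 0 ≤ M.f₁ x p - M.f₂ x p := by rw [hf1p]; linarith only [e1]
            have h2 : 0 < c/(2*θ) := by positivity
            linarith only [h1, h2]
          · have hub : M.R x p ≤ 1 := by
              rw [hRp x hx0, ← hK1]; exact hRanti 𝔔 K x hK0 hxK.le
            have hlb : 1 - c / (2 * θ * F) < M.R x p := by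
              rw [hRp x hx0]
              calc 1 - c / (2 * θ * F) < M.R (K + ε) 𝔔 := hRKε
                _ ≤ M.R x 𝔔 := hRanti 𝔔 x (K + ε) hx0 hxu
            have hf2p : M.f₂ x p ≤ F := hF x ⟨hx0, by linarith only [hxu, hεε₁]⟩ p
            have hf2p0 : 0 < M.f₂ x p := hf2pos x hx0 p
            have hf1p : M.f₁ x p = M.R x p * M.f₂ x p := hf1mul x hx0 p
            have h1 : (M.R x p - 1) * F ≤ M.f₁ x p - M.f₂ x p := by
              have e1 : 0 ≤ (1 - M.R x p) * (F - M.f₂ x p) :=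
                mul_nonneg (by linarith only [hub]) (by linarith only [hf2p])
              rw [hf1p]
              linarith only [e1]
            have h2 : -(c/(2*θ)) ≤ (M.R x p - 1) * F := by
              have he : -(c/(2*θ*F)) * F = -(c/(2*θ)) := by field_simp
              have e2 : -(c/(2*θ*F)) * F ≤ (M.R x p - 1) * F :=
                mul_le_mul_of_nonneg_right (by linarith only [hlb]) hFpos.le
              calc -(c/(2*θ)) = -(c/(2*θ*F)) * F := he.symm
                _ ≤ (M.R x p - 1) * F := e2
            linarith only [h1, h2]
        have hκc : κ ≤ c/(2*θ) := min_le_right _ _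
        have h3 : θ * (-(c/(2*θ)) - c/(2*θ)) ≤ θ * ((M.f₁ x p - M.f₂ x p) - κ) := by
          apply mul_le_mul_of_nonneg_left _ hθpos.le
          linarith only [hp2, hκc]
        have h4 : θ * (-(c/(2*θ)) - c/(2*θ)) = -c := by field_simp; ring
        linarith only [hq2, h3, h4]
    -- conclusion via the decay lemma
    refine ⟨δB, hδBpos, ?_⟩
    set C₁ : ℝ := max C₀ 1 with hC₁def
    have hsub : Ici T ⊆ Ici (0:ℝ) := Ici_subset_Ici.2 hT0
    apply myDecay (T := T) (c := c) (θ := θ) (C₁ := C₁)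
      (a := a) (a' := a')
      (σ := fun t => (M.f₁ (X t) p - M.f₂ (X t) p) - κ)
      (g' := fun t => ∫ q in Metric.ball qb δB, (M.f₁ (X t) q - M.f₂ (X t) q) ∂(μ t))
      hcpos hθpos.le (lt_of_lt_of_le one_pos (le_max_right _ _))
    · exact fun t ht => (hderivE _ measurableSet_ball t (hsub ht)).mono hsub
    · exact fun t ht => (hda t (hsub ht)).mono hsub
    · exact fun t => hEnn t _
    · exact fun t ht => hapos t (hsub ht)
    · exact fun t ht =>
        le_trans (hmE t _) (le_trans (hXglob t (hsub ht)) (le_max_left _ _))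
    · intro t ht
      have hXmem : X t ∈ Icc (0:ℝ) (K + ε) := ⟨hXnn t, hXev t ht⟩
      exact hDb t _ measurableSet_ball _
        (fun q hq => hmaster (X t) hXmem q hq)
    · intro t ht
      have hXmem : X t ∈ Icc (0:ℝ) (K + ε) := ⟨hXnn t, hXev t ht⟩
      apply hDlb t _ measurableSet_ball
      intro q hq
      have := hAclose (X t) hXmem q hq
      rw [abs_le] at this
      linarith [this.1]




end
end

section
/- Let (μ(t))_{t≥0} be a solution of the pure selection model such that supp(μ(0)) ∩ [𝔔]_R ≠ ∅. Then the total population converges to the carrying capacity of the fittest class: lim_{t→∞} μ(t)(Q) = K_𝔔. -/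
open MeasureTheory Filter Set Topology

noncomputable section

lemma cont_uncurry_aux {Q : Type*} [MetricSpace Q] (f : ℝ → Q → ℝ)
    (hlip : ∀ C : ℝ, ∃ L : ℝ, 0 ≤ L ∧ ∀ q : Q, ∀ X ∈ Set.Icc (-C) C, ∀ Y ∈ Set.Icc (-C) C,
      |f X q - f Y q| ≤ L * |X - Y|)
    (hc : ∀ X, Continuous fun q => f X q) :
    Continuous fun p : ℝ × Q => f p.1 p.2 := by
  rw [continuous_iff_continuousAt]
  rintro ⟨x₀, q₀⟩
  rw [Metric.continuousAt_iff]
  intro ε hε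
  obtain ⟨L, hL0, hL⟩ := hlip (|x₀| + 1)
  obtain ⟨δ₂, hδ₂, hq⟩ := Metric.continuousAt_iff.1 ((hc x₀).continuousAt (x := q₀)) (ε/2) (by linarith)
  refine ⟨min δ₂ (min 1 (ε/(2*(L+1)))), by positivity, ?_⟩
  rintro ⟨x, q⟩ hp
  rw [Prod.dist_eq] at hp
  simp only [max_lt_iff] at hp
  obtain ⟨hpx, hpq⟩ := hp
  have hx1 : |x - x₀| < 1 := lt_of_lt_of_le (lt_of_lt_of_le hpx (min_le_right _ _)) (min_le_left _ _)
  have hxε : |x - x₀| < ε/(2*(L+1)) :=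
    lt_of_lt_of_le (lt_of_lt_of_le hpx (min_le_right _ _)) (min_le_right _ _)
  have hxmem : x ∈ Set.Icc (-(|x₀| + 1)) (|x₀| + 1) := by
    rw [Real.dist_eq] at hpx
    constructor <;> [nlinarith [abs_lt.1 hx1, neg_abs_le x₀]; nlinarith [abs_lt.1 hx1, le_abs_self x₀]]
  have hx₀mem : x₀ ∈ Set.Icc (-(|x₀| + 1)) (|x₀| + 1) := by
    constructor <;> [nlinarith [neg_abs_le x₀]; nlinarith [le_abs_self x₀]]
  have h1 : |f x q - f x₀ q| ≤ L * |x - x₀| := hL q x hxmem x₀ hx₀mem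
  have h2 : |f x₀ q - f x₀ q₀| < ε/2 := by
    have := hq (lt_of_lt_of_le hpq (min_le_left _ _))
    rwa [Real.dist_eq] at this
  have h3 : L * |x - x₀| ≤ L * (ε/(2*(L+1))) := by
    apply mul_le_mul_of_nonneg_left hxε.le hL0
  have h4 : L * (ε/(2*(L+1))) < ε/2 := by
    rw [← mul_div_assoc, div_lt_div_iff₀ (by linarith) (by norm_num)]
    nlinarith
  calc dist (f x q) (f x₀ q₀) = |f x q - f x₀ q₀| := Real.dist_eq _ _
    _ ≤ |f x q - f x₀ q| + |f x₀ q - f x₀ q₀| := abs_sub_le _ _ _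
    _ < ε := by linarith

/-- Generic lower exponential Gronwall estimate. -/
lemma expGronwall_lower (f r Rint : ℝ → ℝ) (t₀ : ℝ)
    (hf : ContinuousOn f (Set.Ici t₀))
    (hR : ∀ t, t₀ < t → HasDerivAt Rint (r t) t) (hRc : ContinuousOn Rint (Set.Ici t₀))
    (hd : ∀ t, t₀ < t → ∃ d, HasDerivAt f d t ∧ r t * f t ≤ d) :
    ∀ t, t₀ ≤ t → f t₀ * Real.exp (Rint t - Rint t₀) ≤ f t := by
  have hgc : ContinuousOn (fun t => f t * Real.exp (-Rint t)) (Set.Ici t₀) :=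
    hf.mul (Real.continuous_exp.comp_continuousOn hRc.neg)
  have key : ∀ x ∈ interior (Set.Ici t₀), ∃ d, r x * f x ≤ d ∧
      HasDerivAt (fun t => f t * Real.exp (-Rint t))
        (d * Real.exp (-Rint x) + f x * (Real.exp (-Rint x) * -(r x))) x := by
    intro x hx
    rw [interior_Ici] at hx
    obtain ⟨d, hd1, hd2⟩ := hd x hx
    exact ⟨d, hd2, hd1.mul ((hR x hx).neg.exp)⟩
  have hmono : MonotoneOn (fun t => f t * Real.exp (-Rint t)) (Set.Ici t₀) := by
    apply monotoneOn_of_deriv_nonneg (convex_Ici t₀) hgc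
    · intro x hx
      obtain ⟨d, _, hg⟩ := key x hx
      exact hg.differentiableAt.differentiableWithinAt
    · intro x hx
      obtain ⟨d, hle, hg⟩ := key x hx
      rw [hg.deriv]
      have hexp : 0 < Real.exp (-Rint x) := Real.exp_pos _
      nlinarith
  intro t ht
  have h := hmono (Set.self_mem_Ici) ht ht
  have h2 := mul_le_mul_of_nonneg_right h (Real.exp_pos (Rint t)).le
  calc f t₀ * Real.exp (Rint t - Rint t₀)
      = f t₀ * Real.exp (-Rint t₀) * Real.exp (Rint t) := by
        rw [mul_assoc, ← Real.exp_add]; ring_nf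
    _ ≤ f t * Real.exp (-Rint t) * Real.exp (Rint t) := h2
    _ = f t := by rw [mul_assoc, ← Real.exp_add]; simp

/-- Generic upper exponential Gronwall estimate. -/
lemma expGronwall_upper (f r Rint : ℝ → ℝ) (t₀ : ℝ)
    (hf : ContinuousOn f (Set.Ici t₀))
    (hR : ∀ t, t₀ < t → HasDerivAt Rint (r t) t) (hRc : ContinuousOn Rint (Set.Ici t₀))
    (hd : ∀ t, t₀ < t → ∃ d, HasDerivAt f d t ∧ d ≤ r t * f t) :
    ∀ t, t₀ ≤ t → f t ≤ f t₀ * Real.exp (Rint t - Rint t₀) := by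
  have := expGronwall_lower (fun t => -f t) r Rint t₀ hf.neg hR hRc ?_
  · intro t ht
    have h : -f t₀ * Real.exp (Rint t - Rint t₀) ≤ -f t := this t ht
    linarith
  · intro t ht
    obtain ⟨d, hd1, hd2⟩ := hd t ht
    refine ⟨-d, hd1.neg, ?_⟩
    show r t * -f t ≤ -d
    rw [mul_neg]
    linarith

/-- If `f` cannot have positive values with nonpositive derivative-crossing, it stays `≤ c`. -/
lemma no_upcross (f : ℝ → ℝ) (c t₀ : ℝ) (ht₀ : 0 ≤ t₀) (hf : ContinuousOn f (Set.Ici 0))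
    (hder : ∀ t, 0 < t → c < f t → ∃ d, HasDerivAt f d t ∧ d ≤ 0)
    (h0 : f t₀ ≤ c) : ∀ t, t₀ ≤ t → f t ≤ c := by
  intro t₁ ht₁
  by_contra h1
  push_neg at h1
  have ht₀t₁ : t₀ < t₁ := lt_of_le_of_ne ht₁ (by rintro rfl; exact absurd h0 (not_le.2 h1))
  set S := Set.Icc t₀ t₁ ∩ f ⁻¹' Set.Iic c with hS
  have hsub : Set.Icc t₀ t₁ ⊆ Set.Ici 0 := fun x hx => le_trans ht₀ hx.1
  have hSclosed : IsClosed S :=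
    ContinuousOn.preimage_isClosed_of_isClosed (hf.mono hsub) isClosed_Icc isClosed_Iic
  have hSne : S.Nonempty := ⟨t₀, ⟨le_refl _, ht₀t₁.le⟩, h0⟩
  have hSbdd : BddAbove S := (bddAbove_Icc (a := t₀) (b := t₁)).mono Set.inter_subset_left
  obtain ⟨s, hsdef, hsS⟩ : ∃ s, sSup S = s ∧ s ∈ S := ⟨sSup S, rfl, hSclosed.csSup_mem hSne hSbdd⟩
  have hfs : f s ≤ c := hsS.2
  have hst₁ : s < t₁ :=
    lt_of_le_of_ne hsS.1.2 fun h => (not_le.2 h1) (h ▸ hfs)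
  have key : ∀ v, v ∈ Set.Ioc s t₁ → c < f v := by
    intro v hv
    by_contra hcv
    push_neg at hcv
    have : v ∈ S := ⟨⟨le_trans hsS.1.1 hv.1.le, hv.2⟩, hcv⟩
    exact absurd (hsdef ▸ le_csSup hSbdd this) (not_le.2 hv.1)
  have hanti : AntitoneOn f (Set.Icc s t₁) := by
    apply antitoneOn_of_deriv_nonpos (convex_Icc s t₁)
      (hf.mono (fun x hx => le_trans (le_trans ht₀ hsS.1.1) hx.1))
    · intro x hx
      rw [interior_Icc] at hx
      obtain ⟨d, hd1, _⟩ := hder x (lt_of_le_of_lt (le_trans ht₀ hsS.1.1) hx.1)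
        (key x ⟨hx.1, hx.2.le⟩)
      exact hd1.differentiableAt.differentiableWithinAt
    · intro x hx
      rw [interior_Icc] at hx
      obtain ⟨d, hd1, hd2⟩ := hder x (lt_of_le_of_lt (le_trans ht₀ hsS.1.1) hx.1)
        (key x ⟨hx.1, hx.2.le⟩)
      rw [hd1.deriv]; exact hd2
  have := hanti (Set.left_mem_Icc.2 hst₁.le) (Set.right_mem_Icc.2 hst₁.le) hst₁.le
  exact absurd (le_trans this hfs) (not_le.2 h1)

/-- If `f` has strictly positive derivative whenever it is `≤ c` (after time `T`),
then once above `c` it stays above. -/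
lemma no_downcross (f : ℝ → ℝ) (c T : ℝ) (hT : 0 < T) (hf : ContinuousOn f (Set.Ici 0))
    (hder : ∀ t, T ≤ t → f t ≤ c → ∃ d, HasDerivAt f d t ∧ 0 < d)
    (h0 : c < f T) : ∀ t, T ≤ t → c < f t := by
  intro t₁ ht₁
  by_contra h1
  push_neg at h1
  have hTt₁ : T < t₁ := lt_of_le_of_ne ht₁ (by rintro rfl; exact absurd h0 (not_lt.2 h1))
  set S := Set.Icc T t₁ ∩ f ⁻¹' Set.Iic c with hS
  have hsub : Set.Icc T t₁ ⊆ Set.Ici 0 := fun x hx => le_trans hT.le hx.1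
  have hSclosed : IsClosed S :=
    ContinuousOn.preimage_isClosed_of_isClosed (hf.mono hsub) isClosed_Icc isClosed_Iic
  have hSne : S.Nonempty := ⟨t₁, ⟨hTt₁.le, le_refl _⟩, h1⟩
  have hSbdd : BddBelow S := (bddBelow_Icc (a := t₁) (b := T)).mono Set.inter_subset_left
  obtain ⟨u, hudef, huS⟩ : ∃ u, sInf S = u ∧ u ∈ S := ⟨sInf S, rfl, hSclosed.csInf_mem hSne hSbdd⟩
  have hfu : f u ≤ c := huS.2
  have hTu : T < u :=
    lt_of_le_of_ne huS.1.1 fun h => (not_le.2 h0) (h ▸ hfu)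
  have key : ∀ v, v ∈ Set.Ico T u → c < f v := by
    intro v hv
    by_contra hcv
    push_neg at hcv
    have : v ∈ S := ⟨⟨hv.1, le_trans hv.2.le huS.1.2⟩, hcv⟩
    exact absurd (hudef ▸ csInf_le hSbdd this) (not_le.2 hv.2)
  obtain ⟨d, hd1, hd2⟩ := hder u huS.1.1 huS.2
  have hslope : Filter.Tendsto (slope f u) (𝓝[<] u) (𝓝 d) :=
    (hasDerivAt_iff_tendsto_slope.1 hd1).mono_left
      (nhdsWithin_mono u (fun x hx => ne_of_lt hx))
  have hev1 : ∀ᶠ v in 𝓝[<] u, 0 < slope f u v := hslope.eventually (lt_mem_nhds hd2)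
  have hev2 : Set.Ioo T u ∈ 𝓝[<] u := Ioo_mem_nhdsLT_of_mem ⟨hTu, le_refl u⟩
  obtain ⟨v, hv1, hv2⟩ := (hev1.and (Filter.eventually_of_mem hev2 (fun x hx => hx))).exists
  have hvu : v < u := hv2.2
  have : f v < f u := by
    have hslope_eq : slope f u v = (f v - f u) / (v - u) := slope_def_field f u v
    rw [hslope_eq] at hv1
    have hneg : v - u < 0 := by linarith
    rcases div_pos_iff.1 hv1 with ⟨ha, hb⟩ | ⟨ha, hb⟩
    · linarith
    · linarith
  have h3 : c < f v := key v ⟨hv2.1.le, hvu⟩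
  linarith
lemma expGronwall_lower_const (f : ℝ → ℝ) (β t₀ : ℝ) (hf : ContinuousOn f (Set.Ici t₀))
    (hd : ∀ t, t₀ < t → ∃ d, HasDerivAt f d t ∧ β * f t ≤ d) :
    ∀ t, t₀ ≤ t → f t₀ * Real.exp (β * (t - t₀)) ≤ f t := by
  have h := expGronwall_lower f (fun _ => β) (fun u => β * (u - t₀)) t₀ hf
    (fun t _ => by simpa using ((hasDerivAt_id t).sub_const t₀).const_mul β)
    ((continuous_const.mul (continuous_id.sub continuous_const)).continuousOn) hd
  intro t ht
  have h2 := h t ht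
  simpa using h2

lemma expGronwall_upper_const (f : ℝ → ℝ) (β t₀ : ℝ) (hf : ContinuousOn f (Set.Ici t₀))
    (hd : ∀ t, t₀ < t → ∃ d, HasDerivAt f d t ∧ d ≤ β * f t) :
    ∀ t, t₀ ≤ t → f t ≤ f t₀ * Real.exp (β * (t - t₀)) := by
  have h := expGronwall_upper f (fun _ => β) (fun u => β * (u - t₀)) t₀ hf
    (fun t _ => by simpa using ((hasDerivAt_id t).sub_const t₀).const_mul β)
    ((continuous_const.mul (continuous_id.sub continuous_const)).continuousOn) hd
  intro t ht
  have h2 := h t ht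
  simpa using h2
section EGTFacts

variable {Q : Type*} [MetricSpace Q] (M : EGTRates Q) {𝔔 𝔮 : Q}

lemma EGT_f₂_lower {ϖ : ℝ} (hϖ : ∀ q, ϖ ≤ M.f₂ 0 q) {x : ℝ} (hx : 0 ≤ x) (q : Q) :
    ϖ ≤ M.f₂ x q :=
  (hϖ q).trans (M.f₂_mono q Set.self_mem_Ici hx hx)

lemma EGT_f₂_pos_s6 {x : ℝ} (hx : 0 ≤ x) (q : Q) : 0 < M.f₂ x q := by
  obtain ⟨ϖ, hϖ0, hϖ⟩ := M.f₂_inf_pos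
  exact lt_of_lt_of_le hϖ0 (EGT_f₂_lower M hϖ hx q)

lemma EGT_F_eq {x : ℝ} (hx : 0 ≤ x) (q : Q) :
    M.f₁ x q - M.f₂ x q = M.f₂ x q * (M.R x q - 1) := by
  have h := EGT_f₂_pos_s6 M hx q
  unfold EGTRates.R
  field_simp

lemma EGT_R_anti_s6 (q : Q) {x y : ℝ} (hx : 0 ≤ x) (hxy : x ≤ y) : M.R y q ≤ M.R x q := by
  unfold EGTRates.R
  have hy : 0 ≤ y := hx.trans hxy
  exact div_le_div₀ (M.f₁_nonneg x q)
    (M.f₁_anti q hx (hy : y ∈ Set.Ici 0) hxy)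
    (EGT_f₂_pos_s6 M hx q)
    (M.f₂_mono q hx (hy : y ∈ Set.Ici 0) hxy)

lemma EGT_R_le (hA : M.Assumptions 𝔔 𝔮) {x : ℝ} (hx : 0 ≤ x) (q : Q) :
    M.R x q ≤ M.R x 𝔔 := by
  rcases lt_or_eq_of_le (hA.1 q) with h | h
  · exact ((hA.2.2.2.1 𝔔 q x hx).1 h).le
  · exact le_of_eq ((hA.2.2.2.1 q 𝔔 x hx).2 h)

lemma EGT_R_class (hA : M.Assumptions 𝔔 𝔮) {q₀ : Q} (hq₀ : M.R 0 q₀ = M.R 0 𝔔)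
    {x : ℝ} (hx : 0 ≤ x) : M.R x q₀ = M.R x 𝔔 :=
  (hA.2.2.2.1 q₀ 𝔔 x hx).2 hq₀

lemma EGT_carCap_nonneg : 0 ≤ M.carCap 𝔔 := by
  unfold EGTRates.carCap
  split
  · exact Real.sInf_nonneg fun y hy => hy.1
  · exact le_refl 0

lemma EGT_carCap_eq_zero (h : ¬ 1 ≤ M.R 0 𝔔) : M.carCap 𝔔 = 0 := by
  unfold EGTRates.carCap
  rw [if_neg h]

lemma EGT_R_lt_one (hA : M.Assumptions 𝔔 𝔮) {x : ℝ} (hgt : M.carCap 𝔔 < x) :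
    M.R x 𝔔 < 1 := by
  have h0 : 0 ≤ M.carCap 𝔔 := EGT_carCap_nonneg M
  by_cases h1 : 1 ≤ M.R 0 𝔔
  · have hK := (hA.2.2.2.2.1 h1).1
    have hle : M.R x 𝔔 ≤ 1 := hK ▸ EGT_R_anti_s6 M 𝔔 h0 hgt.le
    rcases lt_or_eq_of_le hle with h | h
    · exact h
    · exact absurd ((hA.2.2.2.2.1 h1).2 x (h0.trans hgt.le) h) (ne_of_gt hgt)
  · have hK0 : M.carCap 𝔔 = 0 := EGT_carCap_eq_zero M h1
    rw [hK0] at hgt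
    exact lt_of_le_of_lt (EGT_R_anti_s6 M 𝔔 le_rfl hgt.le) (not_le.1 h1)

lemma EGT_one_le_R (hA : M.Assumptions 𝔔 𝔮) (hKpos : 0 < M.carCap 𝔔) {x : ℝ}
    (hx : 0 ≤ x) (hxK : x ≤ M.carCap 𝔔) : 1 ≤ M.R x 𝔔 := by
  have h1 : 1 ≤ M.R 0 𝔔 := by
    by_contra h
    rw [EGT_carCap_eq_zero M h] at hKpos
    exact lt_irrefl 0 hKpos
  have hK := (hA.2.2.2.2.1 h1).1
  exact hK ▸ EGT_R_anti_s6 M 𝔔 hx hxK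

lemma EGT_one_lt_R (hA : M.Assumptions 𝔔 𝔮) (hKpos : 0 < M.carCap 𝔔) {x : ℝ}
    (hx : 0 ≤ x) (hlt : x < M.carCap 𝔔) : 1 < M.R x 𝔔 := by
  have h1 : 1 ≤ M.R 0 𝔔 := by
    by_contra h
    rw [EGT_carCap_eq_zero M h] at hKpos
    exact lt_irrefl 0 hKpos
  have hle := EGT_one_le_R M hA hKpos hx hlt.le
  rcases lt_or_eq_of_le hle with h | h
  · exact h
  · exact absurd ((hA.2.2.2.2.1 h1).2 x hx h.symm) (ne_of_lt hlt)

lemma EGT_cont_f₁ : Continuous fun p : ℝ × Q => M.f₁ p.1 p.2 :=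
  cont_uncurry_aux M.f₁ M.f₁_lip M.f₁_cont

lemma EGT_cont_f₂ : Continuous fun p : ℝ × Q => M.f₂ p.1 p.2 :=
  cont_uncurry_aux M.f₂ M.f₂_lip M.f₂_cont

lemma EGT_contOn_R : ContinuousOn (fun p : ℝ × Q => M.R p.1 p.2) {p : ℝ × Q | 0 ≤ p.1} :=
  ((EGT_cont_f₁ M).continuousOn).div ((EGT_cont_f₂ M).continuousOn)
    (fun p hp => (EGT_f₂_pos_s6 M hp p.2).ne')

end EGTFacts
section SolFacts

variable {Q : Type*} [MetricSpace Q] [CompactSpace Q] [MeasurableSpace Q] [BorelSpace Q]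
  {M : EGTRates Q} {μ : ℝ → Measure Q}

lemma sol_deriv (hμ : IsPureSelectionSolution M μ) {E : Set Q} (hE : MeasurableSet E)
    {t : ℝ} (ht : 0 ≤ t) :
    HasDerivWithinAt (fun s => (μ s E).toReal)
      (∫ q in E, (M.f₁ ((μ t Set.univ).toReal) q - M.f₂ ((μ t Set.univ).toReal) q) ∂ μ t)
      (Set.Ici 0) t := hμ.2 t ht E hE

lemma sol_derivAt (hμ : IsPureSelectionSolution M μ) {E : Set Q} (hE : MeasurableSet E)
    {t : ℝ} (ht : 0 < t) :
    HasDerivAt (fun s => (μ s E).toReal)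
      (∫ q in E, (M.f₁ ((μ t Set.univ).toReal) q - M.f₂ ((μ t Set.univ).toReal) q) ∂ μ t) t :=
  (sol_deriv hμ hE ht.le).hasDerivAt (Ici_mem_nhds ht)

lemma sol_cont (hμ : IsPureSelectionSolution M μ) {E : Set Q} (hE : MeasurableSet E) :
    ContinuousOn (fun s => (μ s E).toReal) (Set.Ici 0) :=
  fun t ht => (sol_deriv hμ hE ht).continuousWithinAt

lemma sol_integrable (hμ : IsPureSelectionSolution M μ) (t : ℝ) {g : Q → ℝ}
    (hg : Continuous g) : Integrable g (μ t) := by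
  haveI := hμ.1 t
  exact hg.integrable_of_hasCompactSupport
    (IsCompact.of_isClosed_subset isCompact_univ (isClosed_tsupport g) (Set.subset_univ _))

lemma sol_setIntegral_ge (hμ : IsPureSelectionSolution M μ) (t : ℝ) {E : Set Q}
    (hE : MeasurableSet E) {g : Q → ℝ} (hg : Continuous g) {α : ℝ}
    (hb : ∀ q ∈ E, α ≤ g q) :
    α * (μ t E).toReal ≤ ∫ q in E, g q ∂ μ t := by
  haveI := hμ.1 t
  have h := MeasureTheory.setIntegral_mono_on
    ((MeasureTheory.integrable_const α).integrableOn)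
    ((sol_integrable hμ t hg).integrableOn) hE hb
  rwa [MeasureTheory.setIntegral_const, smul_eq_mul, mul_comm] at h

lemma sol_setIntegral_le (hμ : IsPureSelectionSolution M μ) (t : ℝ) {E : Set Q}
    (hE : MeasurableSet E) {g : Q → ℝ} (hg : Continuous g) {α : ℝ}
    (hb : ∀ q ∈ E, g q ≤ α) :
    ∫ q in E, g q ∂ μ t ≤ α * (μ t E).toReal := by
  haveI := hμ.1 t
  have h := MeasureTheory.setIntegral_mono_on
    ((sol_integrable hμ t hg).integrableOn)
    ((MeasureTheory.integrable_const α).integrableOn) hE hb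
  rwa [MeasureTheory.setIntegral_const, smul_eq_mul, mul_comm] at h

lemma sol_le_total (hμ : IsPureSelectionSolution M μ) (t : ℝ) (E : Set Q) :
    (μ t E).toReal ≤ (μ t Set.univ).toReal := by
  haveI := hμ.1 t
  exact ENNReal.toReal_mono (measure_ne_top _ _) (measure_mono (Set.subset_univ _))

lemma sol_split (hμ : IsPureSelectionSolution M μ) (t : ℝ) {E : Set Q}
    (hE : MeasurableSet E) :
    (μ t E).toReal + (μ t Eᶜ).toReal = (μ t Set.univ).toReal := by
  haveI := hμ.1 t
  rw [← ENNReal.toReal_add (measure_ne_top _ _) (measure_ne_top _ _),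
    measure_add_measure_compl hE]

lemma sol_integral_split (hμ : IsPureSelectionSolution M μ) (t : ℝ) {E : Set Q}
    (hE : MeasurableSet E) {g : Q → ℝ} (hg : Continuous g) :
    (∫ q in E, g q ∂ μ t) + (∫ q in Eᶜ, g q ∂ μ t) = ∫ q, g q ∂ μ t :=
  MeasureTheory.integral_add_compl hE (sol_integrable hμ t hg)

end SolFacts

/-- Antiderivative for affine transforms of a continuous rate. -/
lemma affine_antideriv (a : ℝ → ℝ) (ha : Continuous a) (κ β t₀ t : ℝ) :
    HasDerivAt (fun u => κ * (∫ s in t₀..u, a s) + β * (u - t₀)) (κ * a t + β) t := by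
  have h1 : HasDerivAt (fun u => ∫ s in t₀..u, a s) (a t) t :=
    intervalIntegral.integral_hasDerivAt_right (ha.intervalIntegrable _ _)
      (ha.stronglyMeasurableAtFilter _ _) ha.continuousAt
  have h2 : HasDerivAt (fun u : ℝ => β * (u - t₀)) (β * 1) t :=
    ((hasDerivAt_id t).sub_const t₀).const_mul β
  have h3 := (h1.const_mul κ).add h2
  rw [mul_one] at h3
  exact h3
set_option maxHeartbeats 2000000 in
/-- Total population limit: for a pure selection solution with
`supp(μ(0)) ∩ [𝔔]_R ≠ ∅` the total population converges to `K_𝔔`. -/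
theorem pureSelection_total_population_tendsto_carCap
    {Q : Type*} [MetricSpace Q] [CompactSpace Q] [MeasurableSpace Q] [BorelSpace Q]
    (M : EGTRates Q) (𝔔 𝔮 : Q) (hA : M.Assumptions 𝔔 𝔮)
    (μ : ℝ → Measure Q) (hμ : IsPureSelectionSolution M μ)
    (hsupp : (msupport (μ 0) ∩ M.fittestClass 𝔔).Nonempty) :
    Filter.Tendsto (fun t => ((μ t) Set.univ).toReal) Filter.atTop (nhds (M.carCap 𝔔)) := by
  obtain ⟨q₀, hq₀supp, hq₀class⟩ := hsupp
  obtain ⟨ϖ, hϖpos, hϖ⟩ := M.f₂_inf_pos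
  set 𝒦 := M.carCap 𝔔 with h𝒦def
  set X := fun s => ((μ s) Set.univ).toReal with hXdef
  have h𝒦0 : 0 ≤ 𝒦 := EGT_carCap_nonneg M
  have hXnon : ∀ t, 0 ≤ X t := fun t => ENNReal.toReal_nonneg
  have hXcont : ContinuousOn X (Set.Ici 0) := sol_cont hμ MeasurableSet.univ
  have hXder : ∀ t : ℝ, 0 < t →
      HasDerivAt X (∫ q in Set.univ, (M.f₁ (X t) q - M.f₂ (X t) q) ∂ μ t) t :=
    fun t ht => sol_derivAt hμ MeasurableSet.univ ht
  -- pointwise sign facts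
  have hFneg : ∀ x : ℝ, 0 ≤ x → 𝒦 < x → ∀ q, M.f₁ x q - M.f₂ x q ≤ 0 := by
    intro x hx hgt q
    rw [EGT_F_eq M hx q]
    have h1 : M.R x q ≤ M.R x 𝔔 := EGT_R_le M hA hx q
    have h2 : M.R x 𝔔 < 1 := EGT_R_lt_one M hA hgt
    nlinarith [M.f₂_nonneg x q]
  -- global bound
  have hB₀ : ∀ t : ℝ, 0 ≤ t → X t ≤ max (X 0) 𝒦 := by
    apply no_upcross X (max (X 0) 𝒦) 0 le_rfl hXcont _ (le_max_left _ _)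
    intro t ht hgt
    refine ⟨_, hXder t ht, ?_⟩
    have hbd : ∀ q ∈ Set.univ, M.f₁ (X t) q - M.f₂ (X t) q ≤ (0:ℝ) :=
      fun q _ => hFneg (X t) (hXnon t) (lt_of_le_of_lt (le_max_right _ _) hgt) q
    have := sol_setIntegral_le hμ t MeasurableSet.univ
      (((M.f₁_cont (X t))).sub (M.f₂_cont (X t))) hbd
    simpa using this
  set B₀ := max (X 0) 𝒦 with hB₀def
  have hB₀0 : 0 ≤ B₀ := le_trans h𝒦0 (le_max_right _ _)
  -- uniform upper bound for f₂
  obtain ⟨qM, -, hqM⟩ := isCompact_univ.exists_isMaxOn ⟨q₀, Set.mem_univ q₀⟩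
    ((M.f₂_cont B₀).continuousOn)
  set c₂A := M.f₂ B₀ qM with hc₂Adef
  have hc₂A : ∀ x : ℝ, 0 ≤ x → x ≤ B₀ → ∀ q, M.f₂ x q ≤ c₂A := by
    intro x hx hxB q
    exact le_trans (M.f₂_mono q hx (show B₀ ∈ Set.Ici 0 from le_trans hx hxB) hxB) (hqM (Set.mem_univ q))
  have hϖc₂A : ϖ ≤ c₂A := EGT_f₂_lower M hϖ hB₀0 qM
  have hc₂Apos : 0 < c₂A := lt_of_lt_of_le hϖpos hϖc₂A
  have hFlow : ∀ t : ℝ, 0 ≤ t → ∀ q, -c₂A ≤ M.f₁ (X t) q - M.f₂ (X t) q := by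
    intro t ht q
    have h1 := M.f₁_nonneg (X t) q
    have h2 := hc₂A (X t) (hXnon t) (hB₀ t ht) q
    linarith
  -- positivity of balls around q₀
  have hpos : ∀ r : ℝ, 0 < r → ∀ t : ℝ, 0 ≤ t → 0 < (μ t (Metric.ball q₀ r)).toReal := by
    intro r hr t ht
    have hm0 : 0 < (μ 0 (Metric.ball q₀ r)).toReal := by
      haveI := hμ.1 0
      exact ENNReal.toReal_pos (hq₀supp r hr).ne' (measure_ne_top _ _)
    have hg := expGronwall_lower_const (fun s => (μ s (Metric.ball q₀ r)).toReal) (-c₂A) 0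
      (sol_cont hμ Metric.isOpen_ball.measurableSet) ?_ t ht
    · calc (0:ℝ) < (μ 0 (Metric.ball q₀ r)).toReal * Real.exp (-c₂A * (t - 0)) :=
            mul_pos hm0 (Real.exp_pos _)
        _ ≤ _ := hg
    · intro s hs
      refine ⟨_, sol_derivAt hμ Metric.isOpen_ball.measurableSet hs, ?_⟩
      have hbd : ∀ q ∈ Metric.ball q₀ r, -c₂A ≤ M.f₁ (X s) q - M.f₂ (X s) q :=
        fun q _ => hFlow s hs.le q
      have := sol_setIntegral_ge hμ s Metric.isOpen_ball.measurableSet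
        (((M.f₁_cont (X s))).sub (M.f₂_cont (X s))) hbd
      exact this
  -- main case split
  by_cases hcase : ∀ t : ℝ, 0 ≤ t → 𝒦 < X t
  · -- Case: always above 𝒦, X decreases to 𝒦
    have hanti : AntitoneOn X (Set.Ici 0) := by
      apply antitoneOn_of_deriv_nonpos (convex_Ici 0) hXcont
      · intro t ht
        rw [interior_Ici] at ht
        exact (hXder t ht).differentiableAt.differentiableWithinAt
      · intro t ht
        rw [interior_Ici] at ht
        rw [(hXder t ht).deriv]
        have hbd : ∀ q ∈ Set.univ, M.f₁ (X t) q - M.f₂ (X t) q ≤ (0:ℝ) :=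
          fun q _ => hFneg (X t) (hXnon t) (hcase t ht.le) q
        have := sol_setIntegral_le hμ t MeasurableSet.univ
          ((M.f₁_cont (X t)).sub (M.f₂_cont (X t))) hbd
        simpa using this
    set g := fun t : ℝ => X (max t 0) with hgdef
    have hganti : Antitone g := fun s t hst =>
      hanti (le_max_right s 0) (le_max_right t 0) (max_le_max hst le_rfl)
    have hbdd : BddBelow (Set.range g) := by
      refine ⟨𝒦, ?_⟩
      rintro y ⟨t, rfl⟩
      exact (hcase (max t 0) (le_max_right _ _)).le
    have htendsto : Filter.Tendsto g Filter.atTop (𝓝 (⨅ t, g t)) :=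
      tendsto_atTop_ciInf hganti hbdd
    set L := ⨅ t, g t with hLdef
    have hL𝒦 : 𝒦 ≤ L := le_ciInf fun t => (hcase (max t 0) (le_max_right _ _)).le
    have hLle : ∀ t : ℝ, 0 ≤ t → L ≤ X t := by
      intro t ht
      calc L ≤ g t := ciInf_le hbdd t
        _ = X t := by simp [hgdef, max_eq_left ht]
    have hLeq : L = 𝒦 := by
      by_contra hne
      have hL : 𝒦 < L := lt_of_le_of_ne hL𝒦 (Ne.symm hne)
      have hRL : M.R L 𝔔 < 1 := EGT_R_lt_one M hA hL
      have hLpos : 0 < L := lt_of_le_of_lt h𝒦0 hL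
      set cneg := ϖ * (M.R L 𝔔 - 1) * L with hcnegdef
      have hcneg : cneg < 0 := by
        have h9 : M.R L 𝔔 - 1 < 0 := by linarith
        exact mul_neg_of_neg_of_pos (mul_neg_of_pos_of_neg hϖpos h9) hLpos
      have hlin : ∀ t : ℝ, 0 ≤ t → X t ≤ X 0 + cneg * t := by
        intro t ht
        have hmono : AntitoneOn (fun u => X u - cneg * u) (Set.Ici 0) := by
          apply antitoneOn_of_deriv_nonpos (convex_Ici 0)
            (hXcont.sub (continuous_const.mul continuous_id).continuousOn)
          · intro u hu
            rw [interior_Ici] at hu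
            exact ((hXder u hu).sub
              ((hasDerivAt_id u).const_mul cneg)).differentiableAt.differentiableWithinAt
          · intro u hu
            rw [interior_Ici] at hu
            have hD := (hXder u hu).sub ((hasDerivAt_id u).const_mul cneg)
            change deriv (X - fun y => cneg * id y) u ≤ 0
            rw [hD.deriv]
            have hbd : ∀ q ∈ Set.univ,
                M.f₁ (X u) q - M.f₂ (X u) q ≤ ϖ * (M.R L 𝔔 - 1) := by
              intro q _
              rw [EGT_F_eq M (hXnon u) q]
              have h1 : M.R (X u) q ≤ M.R (X u) 𝔔 := EGT_R_le M hA (hXnon u) q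
              have h2 : M.R (X u) 𝔔 ≤ M.R L 𝔔 :=
                EGT_R_anti_s6 M 𝔔 hLpos.le (hLle u hu.le)
              have h3 : ϖ ≤ M.f₂ (X u) q := EGT_f₂_lower M hϖ (hXnon u) q
              nlinarith [M.f₂_nonneg (X u) q]
            have h2 := sol_setIntegral_le hμ u MeasurableSet.univ
              ((M.f₁_cont (X u)).sub (M.f₂_cont (X u))) hbd
            have h3 : ϖ * (M.R L 𝔔 - 1) * X u ≤ cneg := by
              have hXL : L ≤ X u := hLle u hu.le
              have : M.R L 𝔔 - 1 < 0 := by linarith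
              simp only [hcnegdef]
              nlinarith
            have h4 : (∫ q in Set.univ, (M.f₁ (X u) q - M.f₂ (X u) q) ∂ μ u) ≤ cneg :=
              le_trans h2 h3
            simp only [mul_one]
            linarith
        have h5 := hmono Set.self_mem_Ici (Set.mem_Ici.2 ht) ht
        simp only [mul_zero, sub_zero] at h5
        linarith
      have ht'pos : (0:ℝ) ≤ (𝒦 - X 0) / cneg + 1 := by
        have hX0 : 𝒦 < X 0 := hcase 0 le_rfl
        have : 0 ≤ (𝒦 - X 0) / cneg := div_nonneg_iff.2 (Or.inr ⟨by linarith, hcneg.le⟩)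
        linarith
      have h6 := hlin ((𝒦 - X 0) / cneg + 1) ht'pos
      have h7 : cneg * ((𝒦 - X 0) / cneg + 1) < 𝒦 - X 0 := by
        have hne0 : cneg ≠ 0 := hcneg.ne
        have : cneg * ((𝒦 - X 0) / cneg + 1) = (𝒦 - X 0) + cneg := by
          field_simp
        rw [this]
        linarith
      have h8 := hcase ((𝒦 - X 0) / cneg + 1) ht'pos
      linarith
    have htendsto2 : Filter.Tendsto g Filter.atTop (𝓝 𝒦) := hLeq ▸ htendsto
    apply Filter.Tendsto.congr' _ htendsto2
    filter_upwards [Filter.eventually_ge_atTop (0:ℝ)] with t ht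
    simp [hgdef, max_eq_left ht]
  · -- Case: X reaches [0, 𝒦] and stays there
    push_neg at hcase
    obtain ⟨t₀', ht₀'0, ht₀'⟩ := hcase
    have hinv' : ∀ t, t₀' ≤ t → X t ≤ 𝒦 := by
      apply no_upcross X 𝒦 t₀' ht₀'0 hXcont _ ht₀'
      intro t ht hgt
      refine ⟨_, hXder t ht, ?_⟩
      have hbd : ∀ q ∈ Set.univ, M.f₁ (X t) q - M.f₂ (X t) q ≤ (0:ℝ) :=
        fun q _ => hFneg (X t) (hXnon t) hgt q
      have := sol_setIntegral_le hμ t MeasurableSet.univ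
        (((M.f₁_cont (X t))).sub (M.f₂_cont (X t))) hbd
      simpa using this
    set t₀ := t₀' + 1 with ht₀def
    have ht₀pos : 0 < t₀ := by linarith
    have hinv : ∀ t, t₀ ≤ t → X t ≤ 𝒦 := fun t ht => hinv' t (by linarith)
    rw [Metric.tendsto_atTop]
    intro ε hε
    by_cases h𝒦small : 𝒦 ≤ ε / 2
    · refine ⟨t₀, fun t ht => ?_⟩
      have h1 := hinv t ht
      have h2 := hXnon t
      rw [Real.dist_eq, abs_lt]
      constructor <;> nlinarith
    · push_neg at h𝒦small
      have h𝒦pos : 0 < 𝒦 := lt_trans (by linarith) h𝒦small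
      set ε' := ε / 2 with hε'def
      have hε'pos : 0 < ε' := by positivity
      have hε'lt : ε' < 𝒦 := h𝒦small
      -- the fitness margin at 𝒦 - ε'
      have hδ : 1 < M.R (𝒦 - ε') 𝔔 :=
        EGT_one_lt_R M hA h𝒦pos (by linarith) (by linarith)
      set δ := M.R (𝒦 - ε') 𝔔 - 1 with hδdef
      have hδpos : 0 < δ := by simp only [hδdef]; linarith
      set δ₂ := ϖ * δ / 2 with hδ₂def
      have hδ₂pos : 0 < δ₂ := by positivity
      -- uniform continuity modulus
      have hUC : ∀ ω : ℝ, 0 < ω → ∃ r : ℝ, 0 < r ∧ ∀ x ∈ Set.Icc (0:ℝ) B₀,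
          ∀ q ∈ Metric.ball q₀ r,
          (M.f₁ x q₀ - M.f₂ x q₀) - ω ≤ M.f₁ x q - M.f₂ x q := by
        intro ω hω
        have hFc : Continuous fun p : ℝ × Q => M.f₁ p.1 p.2 - M.f₂ p.1 p.2 :=
          (EGT_cont_f₁ M).sub (EGT_cont_f₂ M)
        have hcp : IsCompact (Set.Icc (0:ℝ) B₀ ×ˢ (Set.univ : Set Q)) :=
          isCompact_Icc.prod isCompact_univ
        have hucOn := hcp.uniformContinuousOn_of_continuous hFc.continuousOn
        rw [Metric.uniformContinuousOn_iff] at hucOn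
        obtain ⟨r, hr, hprop⟩ := hucOn ω hω
        refine ⟨r, hr, ?_⟩
        intro x hx q hq
        have hd : dist ((x, q) : ℝ × Q) ((x, q₀) : ℝ × Q) < r := by
          rw [Prod.dist_eq]
          simp only [dist_self]
          rw [max_eq_right dist_nonneg]
          exact Metric.mem_ball.1 hq
        have h1 := hprop (x, q) ⟨hx, Set.mem_univ _⟩ (x, q₀) ⟨hx, Set.mem_univ _⟩ hd
        rw [Real.dist_eq, abs_sub_lt_iff] at h1
        have := h1.2
        linarith
      -- the rate function along the trajectory at the fittest point
      set a := fun t : ℝ => M.f₁ (X (max t 0)) q₀ - M.f₂ (X (max t 0)) q₀ with hadef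
      have hYcont : Continuous fun t : ℝ => X (max t 0) :=
        hXcont.comp_continuous (continuous_id.max continuous_const)
          (fun t => Set.mem_Ici.2 (le_max_right _ _))
      have ha : Continuous a := by
        apply Continuous.sub
        · exact (EGT_cont_f₁ M).comp (hYcont.prodMk continuous_const)
        · exact (EGT_cont_f₂ M).comp (hYcont.prodMk continuous_const)
      have haX : ∀ t : ℝ, 0 ≤ t → a t = M.f₁ (X t) q₀ - M.f₂ (X t) q₀ := by
        intro t ht
        simp only [hadef, max_eq_left ht]
      have ha_nonneg : ∀ t, t₀ ≤ t → 0 ≤ a t := by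
        intro t ht
        rw [haX t (by linarith)]
        rw [EGT_F_eq M (hXnon t) q₀]
        have hcls : M.R (X t) q₀ = M.R (X t) 𝔔 := EGT_R_class M hA hq₀class (hXnon t)
        have h1 : 1 ≤ M.R (X t) 𝔔 := EGT_one_le_R M hA h𝒦pos (hXnon t) (hinv t ht)
        nlinarith [M.f₂_nonneg (X t) q₀]
      -- L1 : the integral of a grows sublinearly
      have hL1 : ∀ ω : ℝ, 0 < ω → ∃ C : ℝ, ∀ t, t₀ ≤ t →
          (∫ s in t₀..t, a s) ≤ ω * (t - t₀) + C := by
        intro ω hω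
        obtain ⟨r, hr, hrprop⟩ := hUC ω hω
        set m := fun t : ℝ => (μ t (Metric.ball q₀ r)).toReal with hmdef
        have hmcont : ContinuousOn m (Set.Ici t₀) :=
          (sol_cont hμ Metric.isOpen_ball.measurableSet).mono
            (Set.Ici_subset_Ici.2 ht₀pos.le)
        have hgron := expGronwall_lower m (fun t => a t - ω)
          (fun u => 1 * (∫ s in t₀..u, a s) + (-ω) * (u - t₀)) t₀ hmcont
          (fun t _ => by
            have h := affine_antideriv a ha 1 (-ω) t₀ t
            have heq : 1 * a t + (-ω) = a t - ω := by ring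
            rw [heq] at h
            exact h)
          (fun u _ => ((affine_antideriv a ha 1 (-ω) t₀ u).continuousAt).continuousWithinAt)
          ?_
        · refine ⟨Real.log (𝒦 / m t₀), ?_⟩
          intro t ht
          have h1 := hgron t ht
          beta_reduce at h1
          rw [intervalIntegral.integral_same] at h1
          rw [show (1:ℝ) * 0 + (-ω) * (t₀ - t₀) = 0 from by ring, sub_zero] at h1
          have h2 : m t ≤ 𝒦 := le_trans (sol_le_total hμ t _) (hinv t ht)
          have hm0 : 0 < m t₀ := hpos r hr t₀ ht₀pos.le
          have h3 : Real.exp (1 * (∫ s in t₀..t, a s) + (-ω) * (t - t₀)) ≤ 𝒦 / m t₀ := by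
            rw [le_div_iff₀ hm0]
            rw [mul_comm] at h1
            linarith
          have h4 := (Real.le_log_iff_exp_le (div_pos h𝒦pos hm0)).2 h3
          linarith
        · intro t ht
          refine ⟨_, sol_derivAt hμ Metric.isOpen_ball.measurableSet (lt_trans ht₀pos ht), ?_⟩
          have hbd : ∀ q ∈ Metric.ball q₀ r, a t - ω ≤ M.f₁ (X t) q - M.f₂ (X t) q := by
            intro q hq
            have hx : X t ∈ Set.Icc (0:ℝ) B₀ := ⟨hXnon t, hB₀ t (le_trans ht₀pos.le ht.le)⟩
            have h5 := hrprop (X t) hx q hq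
            rw [haX t (le_trans ht₀pos.le ht.le)]
            linarith
          exact sol_setIntegral_ge hμ t Metric.isOpen_ball.measurableSet
            ((M.f₁_cont (X t)).sub (M.f₂_cont (X t))) hbd
      -- L3 : choice of the fitness-separation constant c
      have hc : ∃ c : ℝ, 0 < c ∧ ∀ x ∈ Set.Icc (0:ℝ) 𝒦, ∀ q : Q,
          M.R 0 𝔔 - c < M.R 0 q → M.R x 𝔔 - M.R x q < δ / 2 := by
        have hsub : (Set.Icc (0:ℝ) 𝒦 ×ˢ (Set.univ : Set Q)) ⊆ {p : ℝ × Q | 0 ≤ p.1} :=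
          fun p hp => hp.1.1
        have hf1𝔔 : Continuous fun x : ℝ => M.f₁ x 𝔔 :=
          (EGT_cont_f₁ M).comp (continuous_id.prodMk continuous_const)
        have hf2𝔔 : Continuous fun x : ℝ => M.f₂ x 𝔔 :=
          (EGT_cont_f₂ M).comp (continuous_id.prodMk continuous_const)
        have hR𝔔 : ContinuousOn (fun x : ℝ => M.R x 𝔔) (Set.Ici 0) :=
          hf1𝔔.continuousOn.div hf2𝔔.continuousOn fun x hx => (EGT_f₂_pos_s6 M hx 𝔔).ne'
        have hgapcont : ContinuousOn (fun p : ℝ × Q => M.R p.1 𝔔 - M.R p.1 p.2)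
            (Set.Icc (0:ℝ) 𝒦 ×ˢ (Set.univ : Set Q)) :=
          (hR𝔔.comp continuous_fst.continuousOn fun p hp => hp.1.1).sub
            ((EGT_contOn_R M).mono hsub)
        set Aset := (Set.Icc (0:ℝ) 𝒦 ×ˢ (Set.univ : Set Q)) ∩
          {p : ℝ × Q | δ / 2 ≤ M.R p.1 𝔔 - M.R p.1 p.2} with hAdef
        have hAclosed : IsClosed Aset :=
          ContinuousOn.preimage_isClosed_of_isClosed hgapcont
            (isClosed_Icc.prod isClosed_univ) isClosed_Ici
        have hAcp : IsCompact Aset :=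
          (isCompact_Icc.prod isCompact_univ).of_isClosed_subset hAclosed
            Set.inter_subset_left
        rcases Aset.eq_empty_or_nonempty with hAe | hAne
        · refine ⟨1, one_pos, ?_⟩
          intro x hx q _
          by_contra hcon
          push_neg at hcon
          exact Set.notMem_empty ((x, q) : ℝ × Q)
            (hAe ▸ (⟨⟨hx, Set.mem_univ _⟩, hcon⟩ : ((x,q) : ℝ × Q) ∈ Aset))
        · have hφcont : ContinuousOn (fun p : ℝ × Q => M.R 0 𝔔 - M.R 0 p.2) Aset := by
            apply ContinuousOn.sub continuousOn_const
            exact (((M.f₁_cont 0).div (M.f₂_cont 0)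
              (fun q => (EGT_f₂_pos_s6 M le_rfl q).ne')).comp continuous_snd).continuousOn
          obtain ⟨p₁, hp₁A, hp₁min⟩ := hAcp.exists_isMinOn hAne hφcont
          refine ⟨M.R 0 𝔔 - M.R 0 p₁.2, ?_, ?_⟩
          · have hx₁ : (0:ℝ) ≤ p₁.1 := hp₁A.1.1.1
            have hgap : δ / 2 ≤ M.R p₁.1 𝔔 - M.R p₁.1 p₁.2 := hp₁A.2
            have hne0 : M.R 0 p₁.2 ≠ M.R 0 𝔔 := by
              intro heq
              have heq2 := EGT_R_class M hA heq hx₁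
              rw [heq2] at hgap
              linarith
            have hlt : M.R 0 p₁.2 < M.R 0 𝔔 := lt_of_le_of_ne (hA.1 p₁.2) hne0
            linarith
          · intro x hx q hq
            by_contra hcon
            push_neg at hcon
            have hmem : ((x, q) : ℝ × Q) ∈ Aset := ⟨⟨hx, Set.mem_univ _⟩, hcon⟩
            have hmin : M.R 0 𝔔 - M.R 0 p₁.2 ≤ M.R 0 𝔔 - M.R 0 q :=
              isMinOn_iff.1 hp₁min (x, q) hmem
            linarith
      obtain ⟨c, hcpos, hcprop⟩ := hc
      set U := {q : Q | M.R 0 q ≤ M.R 0 𝔔 - c} with hUdef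
      have hUclosed : IsClosed U := by
        have hR0 : Continuous fun q => M.R 0 q :=
          (M.f₁_cont 0).div (M.f₂_cont 0) (fun q => (EGT_f₂_pos_s6 M le_rfl q).ne')
        exact isClosed_Iic.preimage hR0
      have hUmeas : MeasurableSet U := hUclosed.measurableSet
      -- L2 : unfit mass decays exponentially
      have hL2 : ∃ C₃ : ℝ, 0 ≤ C₃ ∧ ∃ lam : ℝ, 0 < lam ∧ ∀ t, t₀ ≤ t →
          (μ t U).toReal ≤ C₃ * Real.exp (-lam * (t - t₀)) := by
        rcases U.eq_empty_or_nonempty with hUe | ⟨qU, hqU⟩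
        · refine ⟨0, le_rfl, 1, one_pos, ?_⟩
          intro t ht
          rw [hUe]
          simp
        · have hUcp : IsCompact U :=
            isCompact_univ.of_isClosed_subset hUclosed (Set.subset_univ _)
          have hBcp : IsCompact (Set.Icc (0:ℝ) 𝒦 ×ˢ U) := isCompact_Icc.prod hUcp
          have hBne : (Set.Icc (0:ℝ) 𝒦 ×ˢ U).Nonempty := ⟨(0, qU), ⟨⟨le_rfl, h𝒦0⟩, hqU⟩⟩
          have hf1𝔔 : Continuous fun x : ℝ => M.f₁ x 𝔔 :=
            (EGT_cont_f₁ M).comp (continuous_id.prodMk continuous_const)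
          have hf2𝔔 : Continuous fun x : ℝ => M.f₂ x 𝔔 :=
            (EGT_cont_f₂ M).comp (continuous_id.prodMk continuous_const)
          have hR𝔔 : ContinuousOn (fun x : ℝ => M.R x 𝔔) (Set.Ici 0) :=
            hf1𝔔.continuousOn.div hf2𝔔.continuousOn fun x hx => (EGT_f₂_pos_s6 M hx 𝔔).ne'
          have hgap2 : ContinuousOn (fun p : ℝ × Q => M.R p.1 𝔔 - M.R p.1 p.2)
              (Set.Icc (0:ℝ) 𝒦 ×ˢ U) :=
            (hR𝔔.comp continuous_fst.continuousOn fun p hp => hp.1.1).sub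
              ((EGT_contOn_R M).mono fun p hp => hp.1.1)
          obtain ⟨pγ, hpγ, hγmin⟩ := hBcp.exists_isMinOn hBne hgap2
          set γ := M.R pγ.1 𝔔 - M.R pγ.1 pγ.2 with hγdef
          have hγpos : 0 < γ := by
            have hx : (0:ℝ) ≤ pγ.1 := hpγ.1.1
            have hq3 : M.R 0 pγ.2 ≤ M.R 0 𝔔 - c := hpγ.2
            have hlt : M.R 0 pγ.2 < M.R 0 𝔔 := by linarith
            have hstrict := (hA.2.2.2.1 𝔔 pγ.2 pγ.1 hx).1 hlt
            simp only [hγdef]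
            linarith
          set lam := ϖ * γ / 2 with hlamdef
          have hlampos : 0 < lam := by positivity
          set ω₂ := ϖ * ϖ * γ / (2 * c₂A) with hω₂def
          have hω₂pos : 0 < ω₂ := by positivity
          obtain ⟨C₂, hC₂⟩ := hL1 ω₂ hω₂pos
          have hptU : ∀ t, t₀ ≤ t → ∀ q ∈ U,
              M.f₁ (X t) q - M.f₂ (X t) q ≤ (c₂A / ϖ) * a t - ϖ * γ := by
            intro t ht q hqU2
            have hx0 : 0 ≤ X t := hXnon t
            have hx𝒦 : X t ≤ 𝒦 := hinv t ht
            have hgapt : γ ≤ M.R (X t) 𝔔 - M.R (X t) q :=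
              isMinOn_iff.1 hγmin (X t, q) ⟨⟨hx0, hx𝒦⟩, hqU2⟩
            have hR1 : 1 ≤ M.R (X t) 𝔔 := EGT_one_le_R M hA h𝒦pos hx0 hx𝒦
            have hf2q : M.f₂ (X t) q ≤ c₂A :=
              hc₂A (X t) hx0 (le_trans hx𝒦 (le_max_right _ _)) q
            have hf2ϖ : ϖ ≤ M.f₂ (X t) q := EGT_f₂_lower M hϖ hx0 q
            have hf2ϖ₀ : ϖ ≤ M.f₂ (X t) q₀ := EGT_f₂_lower M hϖ hx0 q₀
            have haeq : a t = M.f₂ (X t) q₀ * (M.R (X t) q₀ - 1) := by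
              rw [haX t (le_trans ht₀pos.le ht)]
              exact EGT_F_eq M hx0 q₀
            have hcls : M.R (X t) q₀ = M.R (X t) 𝔔 := EGT_R_class M hA hq₀class hx0
            rw [EGT_F_eq M hx0 q]
            have e1 : M.f₂ (X t) q * (M.R (X t) q - 1) ≤
                M.f₂ (X t) q * (M.R (X t) 𝔔 - 1 - γ) :=
              mul_le_mul_of_nonneg_left (by linarith) (M.f₂_nonneg _ q)
            have e2 : M.f₂ (X t) q * (M.R (X t) 𝔔 - 1) ≤ c₂A * (M.R (X t) 𝔔 - 1) :=
              mul_le_mul_of_nonneg_right hf2q (by linarith)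
            have e3 : ϖ * γ ≤ M.f₂ (X t) q * γ := mul_le_mul_of_nonneg_right hf2ϖ hγpos.le
            have h1 : M.f₂ (X t) q * (M.R (X t) q - 1) ≤
                c₂A * (M.R (X t) 𝔔 - 1) - ϖ * γ := by nlinarith
            have h3 : c₂A ≤ (c₂A / ϖ) * M.f₂ (X t) q₀ := by
              have h4 := mul_le_mul_of_nonneg_left hf2ϖ₀ (le_of_lt (div_pos hc₂Apos hϖpos))
              have h5 : (c₂A / ϖ) * ϖ = c₂A := div_mul_cancel₀ c₂A hϖpos.ne'
              linarith
            have h2 : c₂A * (M.R (X t) 𝔔 - 1) ≤ (c₂A / ϖ) * a t := by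
              rw [haeq, hcls]
              have h6 := mul_le_mul_of_nonneg_right h3 (sub_nonneg.2 hR1)
              nlinarith
            nlinarith [h1, h2]
          set mU := fun t : ℝ => (μ t U).toReal with hmUdef
          have hmUcont : ContinuousOn mU (Set.Ici t₀) :=
            (sol_cont hμ hUmeas).mono (Set.Ici_subset_Ici.2 ht₀pos.le)
          have hgron := expGronwall_upper mU (fun t => (c₂A / ϖ) * a t - ϖ * γ)
            (fun u => (c₂A / ϖ) * (∫ s in t₀..u, a s) + (-(ϖ * γ)) * (u - t₀)) t₀ hmUcont
            (fun t _ => by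
              have h := affine_antideriv a ha (c₂A / ϖ) (-(ϖ * γ)) t₀ t
              have heq : (c₂A / ϖ) * a t + (-(ϖ * γ)) = (c₂A / ϖ) * a t - ϖ * γ := by ring
              rw [heq] at h
              exact h)
            (fun u _ =>
              ((affine_antideriv a ha (c₂A / ϖ) (-(ϖ * γ)) t₀ u).continuousAt).continuousWithinAt)
            ?_
          · refine ⟨mU t₀ * Real.exp ((c₂A / ϖ) * C₂),
              mul_nonneg ENNReal.toReal_nonneg (Real.exp_pos _).le, lam, hlampos, ?_⟩
            intro t ht
            have h1 := hgron t ht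
            beta_reduce at h1
            rw [intervalIntegral.integral_same] at h1
            rw [show (c₂A / ϖ) * 0 + (-(ϖ * γ)) * (t₀ - t₀) = 0 from by ring, sub_zero] at h1
            have hAt := hC₂ t ht
            have hs0 : 0 ≤ t - t₀ := by linarith
            have hmul : (c₂A / ϖ) * (∫ s in t₀..t, a s) ≤ (c₂A / ϖ) * (ω₂ * (t - t₀) + C₂) :=
              mul_le_mul_of_nonneg_left hAt (le_of_lt (div_pos hc₂Apos hϖpos))
            have hkey2 : (c₂A / ϖ) * ω₂ = lam := by
              simp only [hω₂def, hlamdef]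
              field_simp
            have hlameq : ϖ * γ = 2 * lam := by
              simp only [hlamdef]
              ring
            have hsub1 : (c₂A / ϖ) * ω₂ * (t - t₀) = lam * (t - t₀) := by rw [hkey2]
            have hsub2 : (ϖ * γ) * (t - t₀) = 2 * lam * (t - t₀) := by rw [hlameq]
            have hexp : (c₂A / ϖ) * (∫ s in t₀..t, a s) + (-(ϖ * γ)) * (t - t₀)
                ≤ (c₂A / ϖ) * C₂ + (-lam) * (t - t₀) := by nlinarith [hmul, hsub1, hsub2]
            have h2 : mU t ≤ mU t₀ * Real.exp ((c₂A / ϖ) * C₂ + (-lam) * (t - t₀)) :=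
              le_trans h1 (mul_le_mul_of_nonneg_left (Real.exp_le_exp.2 hexp)
                ENNReal.toReal_nonneg)
            calc (μ t U).toReal = mU t := rfl
              _ ≤ mU t₀ * Real.exp ((c₂A / ϖ) * C₂ + (-lam) * (t - t₀)) := h2
              _ = mU t₀ * Real.exp ((c₂A / ϖ) * C₂) * Real.exp (-lam * (t - t₀)) := by
                  rw [Real.exp_add]
                  ring
          · intro t ht
            refine ⟨_, sol_derivAt hμ hUmeas (lt_trans ht₀pos ht), ?_⟩
            exact sol_setIntegral_le hμ t hUmeas
              ((M.f₁_cont (X t)).sub (M.f₂_cont (X t))) (fun q hq => hptU t ht.le q hq)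
      obtain ⟨C₃, hC₃0, lam, hlampos, hL2⟩ := hL2
      -- lower exponential bound on X
      have hXlow : ∃ c₄ : ℝ, 0 < c₄ ∧ ∀ t, t₀ ≤ t →
          c₄ * Real.exp (-(lam/2) * (t - t₀)) ≤ X t := by
        obtain ⟨r₂, hr₂, hr₂prop⟩ := hUC (lam / 2) (by positivity)
        set m₂ := fun t : ℝ => (μ t (Metric.ball q₀ r₂)).toReal with hm₂def
        have hm₂cont : ContinuousOn m₂ (Set.Ici t₀) :=
          (sol_cont hμ Metric.isOpen_ball.measurableSet).mono (Set.Ici_subset_Ici.2 ht₀pos.le)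
        have hgron := expGronwall_lower_const m₂ (-(lam/2)) t₀ hm₂cont ?_
        · refine ⟨m₂ t₀, hpos r₂ hr₂ t₀ ht₀pos.le, ?_⟩
          intro t ht
          exact le_trans (hgron t ht) (sol_le_total hμ t _)
        · intro t ht
          refine ⟨_, sol_derivAt hμ Metric.isOpen_ball.measurableSet (lt_trans ht₀pos ht), ?_⟩
          have hbd : ∀ q ∈ Metric.ball q₀ r₂, -(lam/2) ≤ M.f₁ (X t) q - M.f₂ (X t) q := by
            intro q hq
            have hx : X t ∈ Set.Icc (0:ℝ) B₀ := ⟨hXnon t, hB₀ t (le_trans ht₀pos.le ht.le)⟩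
            have h5 := hr₂prop (X t) hx q hq
            have h6 := ha_nonneg t ht.le
            rw [haX t (le_trans ht₀pos.le ht.le)] at h6
            linarith
          exact sol_setIntegral_ge hμ t Metric.isOpen_ball.measurableSet
            ((M.f₁_cont (X t)).sub (M.f₂_cont (X t))) hbd
      obtain ⟨c₄, hc₄pos, hXlow⟩ := hXlow
      -- choice of T₂
      have hT₂ : ∃ T₂ : ℝ, t₀ < T₂ ∧ ∀ t, T₂ ≤ t →
          (δ₂ + c₂A) * (C₃ * Real.exp (-lam * (t - t₀))) ≤
            (δ₂ / 2) * (c₄ * Real.exp (-(lam/2) * (t - t₀))) := by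
        have hden : (0:ℝ) < (δ₂ + c₂A) * C₃ + 1 := by
          have : (0:ℝ) ≤ (δ₂ + c₂A) * C₃ := mul_nonneg (by linarith) hC₃0
          linarith
        set κ := (δ₂ / 2) * c₄ / ((δ₂ + c₂A) * C₃ + 1) with hκdef
        have hκpos : 0 < κ := div_pos (mul_pos (by linarith) hc₄pos) hden
        refine ⟨t₀ + max 1 (2 * (-Real.log κ) / lam + 1), by
          have := le_max_left (1:ℝ) (2 * (-Real.log κ) / lam + 1)
          linarith, ?_⟩
        intro t ht
        have hΔ : 2 * (-Real.log κ) / lam + 1 ≤ t - t₀ := by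
          have := le_max_right (1:ℝ) (2 * (-Real.log κ) / lam + 1)
          linarith
        have hE : Real.exp (-(lam/2) * (t - t₀)) ≤ κ := by
          rw [show κ = Real.exp (Real.log κ) from (Real.exp_log hκpos).symm]
          apply Real.exp_le_exp.2
          have h7 : 2 * (-Real.log κ) / lam ≤ t - t₀ := by linarith
          have h8 : 2 * (-Real.log κ) ≤ lam * (t - t₀) := by
            rw [div_le_iff₀ hlampos] at h7
            linarith
          nlinarith
        have hEpos : 0 < Real.exp (-(lam/2) * (t - t₀)) := Real.exp_pos _
        have hsq : Real.exp (-lam * (t - t₀)) =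
            Real.exp (-(lam/2) * (t - t₀)) * Real.exp (-(lam/2) * (t - t₀)) := by
          rw [← Real.exp_add]
          ring_nf
        rw [hsq]
        have h9 : (δ₂ + c₂A) * C₃ * κ ≤ (δ₂/2) * c₄ := by
          rw [hκdef, ← mul_div_assoc, div_le_iff₀ hden]
          have hN : (0:ℝ) ≤ (δ₂/2) * c₄ := le_of_lt (mul_pos (by linarith) hc₄pos)
          nlinarith
        have h10 : (δ₂ + c₂A) * C₃ * Real.exp (-(lam/2) * (t - t₀)) ≤ (δ₂/2) * c₄ :=
          le_trans (mul_le_mul_of_nonneg_left hE (mul_nonneg (by linarith) hC₃0)) h9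
        nlinarith [mul_le_mul_of_nonneg_right h10 hEpos.le]
      obtain ⟨T₂, hT₂gt, hT₂prop⟩ := hT₂
      -- key derivative lower bound
      have hkey : ∀ t, T₂ ≤ t → X t ≤ 𝒦 - ε' →
          (δ₂ / 2) * X t ≤ ∫ q in Set.univ, (M.f₁ (X t) q - M.f₂ (X t) q) ∂ μ t := by
        intro t hT hle
        have ht0 : t₀ ≤ t := le_trans hT₂gt.le hT
        have hx0 : 0 ≤ X t := hXnon t
        have hcont : Continuous fun q => M.f₁ (X t) q - M.f₂ (X t) q :=
          (M.f₁_cont (X t)).sub (M.f₂_cont (X t))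
        have hsplit := sol_integral_split hμ t hUmeas hcont
        have huniv : (∫ q in Set.univ, (M.f₁ (X t) q - M.f₂ (X t) q) ∂ μ t)
            = (∫ q, (M.f₁ (X t) q - M.f₂ (X t) q) ∂ μ t) := by
          rw [MeasureTheory.setIntegral_univ]
        have hbdc : ∀ q ∈ Uᶜ, δ₂ ≤ M.f₁ (X t) q - M.f₂ (X t) q := by
          intro q hq
          have hq2 : M.R 0 𝔔 - c < M.R 0 q := by
            by_contra h
            push_neg at h
            exact hq h
          have hgaplt : M.R (X t) 𝔔 - M.R (X t) q < δ / 2 :=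
            hcprop (X t) ⟨hx0, le_trans hle (by linarith)⟩ q hq2
          have hR𝒦ε : 1 + δ ≤ M.R (X t) 𝔔 := by
            have h1 : M.R (𝒦 - ε') 𝔔 ≤ M.R (X t) 𝔔 := EGT_R_anti_s6 M 𝔔 hx0 hle
            have h2 : 1 + δ = M.R (𝒦 - ε') 𝔔 := by simp only [hδdef]; ring
            linarith
          have hf2ϖ : ϖ ≤ M.f₂ (X t) q := EGT_f₂_lower M hϖ hx0 q
          rw [EGT_F_eq M hx0 q]
          have hRq : 1 + δ/2 ≤ M.R (X t) q := by linarith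
          have hδ₂eq : δ₂ = ϖ * (δ/2) := by simp only [hδ₂def]; ring
          nlinarith
        have hIc := sol_setIntegral_ge hμ t hUmeas.compl hcont hbdc
        have hIU := sol_setIntegral_ge hμ t hUmeas hcont
          (fun q _ => hFlow t (le_trans ht₀pos.le ht0) q)
        have hmsplit := sol_split hμ t hUmeas
        have hU2 := hL2 t ht0
        have hT2 := hT₂prop t hT
        have hXl := hXlow t ht0
        rw [huniv, ← hsplit]
        have e6 : (μ t Uᶜ).toReal = X t - (μ t U).toReal := by
          have : (μ t Set.univ).toReal = X t := rfl
          linarith [hmsplit]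
        rw [e6] at hIc
        have e4 : (δ₂ + c₂A) * (μ t U).toReal ≤
            (δ₂ + c₂A) * (C₃ * Real.exp (-lam * (t - t₀))) :=
          mul_le_mul_of_nonneg_left hU2 (by linarith)
        have e5 : (δ₂/2) * (c₄ * Real.exp (-(lam/2) * (t - t₀))) ≤ (δ₂/2) * X t :=
          mul_le_mul_of_nonneg_left hXl (by linarith)
        nlinarith [hIc, hIU, e4, e5, hT2]
      -- X eventually exceeds 𝒦 - ε'
      have hT₃ : ∃ T₃, T₂ ≤ T₃ ∧ 𝒦 - ε' < X T₃ := by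
        by_contra hcon
        push_neg at hcon
        have hXT₂pos : 0 < X T₂ :=
          lt_of_lt_of_le (mul_pos hc₄pos (Real.exp_pos _)) (hXlow T₂ hT₂gt.le)
        have hgron := expGronwall_lower_const X (δ₂/2) T₂
          (hXcont.mono (Set.Ici_subset_Ici.2 (le_trans ht₀pos.le hT₂gt.le))) ?_
        · have hlog0 : 0 ≤ Real.log (𝒦 / X T₂) := Real.log_nonneg (by
            rw [le_div_iff₀ hXT₂pos]
            have := hinv T₂ hT₂gt.le
            linarith)
          set tbig := T₂ + 2/δ₂ * (Real.log (𝒦 / X T₂) + 1) with htbigdef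
          have htbig : T₂ ≤ tbig := by
            have h0 : 0 ≤ 2/δ₂ * (Real.log (𝒦 / X T₂) + 1) :=
              mul_nonneg (by positivity) (by linarith)
            simp only [htbigdef]
            linarith
          have h1 := hgron tbig htbig
          have hexp : (δ₂/2) * (tbig - T₂) = Real.log (𝒦 / X T₂) + 1 := by
            simp only [htbigdef]
            field_simp
            ring
          rw [hexp] at h1
          have h2 : X T₂ * Real.exp (Real.log (𝒦 / X T₂) + 1) = 𝒦 * Real.exp 1 := by
            rw [Real.exp_add, Real.exp_log (div_pos h𝒦pos hXT₂pos)]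
            field_simp
          rw [h2] at h1
          have h3 : 1 < Real.exp 1 := by
            have := Real.exp_one_gt_d9
            linarith
          have h4 := hcon tbig htbig
          nlinarith
        · intro t ht
          exact ⟨_, hXder t (lt_trans (lt_trans ht₀pos hT₂gt) ht),
            hkey t ht.le (hcon t ht.le)⟩
      obtain ⟨T₃, hT₃ge, hT₃val⟩ := hT₃
      -- and stays above forever
      have hfinal : ∀ t, T₃ ≤ t → 𝒦 - ε' < X t := by
        apply no_downcross X (𝒦 - ε') T₃ (by linarith) hXcont _ hT₃val
        intro t ht hle
        refine ⟨_, hXder t (by linarith), ?_⟩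
        have h1 := hkey t (le_trans hT₃ge ht) hle
        have h2 : 0 < X t := lt_of_lt_of_le
          (mul_pos hc₄pos (Real.exp_pos _)) (hXlow t (by linarith))
        exact lt_of_lt_of_le (mul_pos (div_pos hδ₂pos two_pos) h2) h1
      refine ⟨T₃, fun t ht => ?_⟩
      have h1 := hfinal t ht
      have h2 := hinv t (by linarith)
      have hε'eq : ε' = ε / 2 := rfl
      rw [Real.dist_eq, abs_lt]
      constructor <;> linarith

end
end
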